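/- arXiv:math-ph/0411019 — 4 statements merged into one kernel-verified Lean document; each statement's English description precedes it below -/
import Mathlib

section
/- Let m ≥ 1, q = (q_1,…,q_m) with each q_i ∈ ℕ, q_i ≥ 1, τ(i) := Σ_{l=1}^{i−1} 2q_l, K := 2(q_1+⋯+q_m), δ ∈ {+1,−1}, and c ∈ ℂ. Define b_{δ,q_i}(z) := 1 if δ = +1 and b_{δ,q_i}(z) := i·z^{1−2q_i} if δ = −1. Let Z : ℝ → ℂ∖{0} and W_1,…,W_m : ℝ → ℂ be measurable such that all integrands below are absolutely integrable. Then the determinant of the K×K matrix, with rows indexed by j = 1,…,K and columns indexed by pairs (i, l_i) with 1 ≤ i ≤ m and 1 ≤ l_i ≤ 2q_i (ordered lexicographically in (i, l_i)), whose ((i,l_i), j) entry is ∫_ℝ W_i(t) · Z(t)^{l_i−1} · (Z(t)^δ + c)^{j−1} dt, equals ∏_{i=1}^m (1/(2q_i)!) · ∫_{ℝ^K} ∏_{i=1}^m ∏_{l_i=τ(i)+1}^{τ(i+1)} W_i(t_{l_i}) · b_{δ,q_i}(Z(t_{l_i})) · ∏_{i=1}^m Δ_{2q_i}(Z(t_{τ(i)+1}),…,Z(t_{τ(i+1)}))²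 · ∏_{1≤j<k≤m} ∏_{l_k=τ(k)+1}^{τ(k+1)} ∏_{l_j=τ(j)+1}^{τ(j+1)} (Z(t_{l_k})^δ − Z(t_{l_j})^δ) dt. -/
open MeasureTheory Finset

/-- The Vandermonde product `∏_{j<k} (z k - z j)` for a complex tuple. -/
noncomputable def vandC {n : ℕ} (z : Fin n → ℂ) : ℂ :=
  ∏ j : Fin n, ∏ k ∈ Finset.Ioi j, (z k - z j)


namespace QDet

variable {m : ℕ} (n : Fin m → ℕ)

/-- lex index of an element of the sigma type -/
def eIdx (a : Σ i : Fin m, Fin (n i)) : ℕ := (∑ i' ∈ Finset.Iio a.1, n i') + (a.2 : ℕ)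

/-- lex-lt relation -/
def lexlt (a b : Σ i : Fin m, Fin (n i)) : Prop :=
  a.1 < b.1 ∨ (a.1 = b.1 ∧ (a.2 : ℕ) < (b.2 : ℕ))

instance : DecidablePred fun ab : (Σ i : Fin m, Fin (n i)) × (Σ i : Fin m, Fin (n i)) =>
    lexlt n ab.1 ab.2 := fun _ => by unfold lexlt; infer_instance

lemma eIdx_lt_of_lexlt {a b : Σ i : Fin m, Fin (n i)} (h : lexlt n a b) :
    eIdx n a < eIdx n b := by
  obtain ⟨i, l⟩ := a
  obtain ⟨j, k⟩ := b
  rcases h with h | ⟨h1, h2⟩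
  · simp only [eIdx]
    have key : (∑ i' ∈ Finset.Iio i, n i') + n i ≤ ∑ i' ∈ Finset.Iio j, n i' := by
      have : insert i (Finset.Iio i) ⊆ Finset.Iio j := by
        intro x hx
        simp only [Finset.mem_insert, Finset.mem_Iio] at hx ⊢
        rcases hx with rfl | hx
        · exact h
        · exact hx.trans h
      calc (∑ i' ∈ Finset.Iio i, n i') + n i = ∑ i' ∈ insert i (Finset.Iio i), n i' := by
            rw [Finset.sum_insert (by simp), add_comm]
        _ ≤ ∑ i' ∈ Finset.Iio j, n i' := Finset.sum_le_sum_of_subset this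
    have hl : (l : ℕ) < n i := l.2
    omega
  · simp only at h1
    subst h1
    simp only [eIdx]
    dsimp only at h2 ⊢
    omega

lemma lexlt_trichotomy (a b : Σ i : Fin m, Fin (n i)) :
    lexlt n a b ∨ a = b ∨ lexlt n b a := by
  obtain ⟨i, l⟩ := a
  obtain ⟨j, k⟩ := b
  rcases lt_trichotomy i j with h | rfl | h
  · exact Or.inl (Or.inl h)
  · rcases lt_trichotomy (l : ℕ) (k : ℕ) with h | h | h
    · exact Or.inl (Or.inr ⟨rfl, h⟩)
    · exact Or.inr (Or.inl (by simp [Fin.ext_iff, h]))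
    · exact Or.inr (Or.inr (Or.inr ⟨rfl, h⟩))
  · exact Or.inr (Or.inr (Or.inl h))

lemma lexlt_irrefl (a : Σ i : Fin m, Fin (n i)) : ¬ lexlt n a a := by
  obtain ⟨i, l⟩ := a
  simp [lexlt]

lemma eIdx_injective : Function.Injective (eIdx n) := by
  intro a b h
  rcases lexlt_trichotomy n a b with h1 | h1 | h1
  · exact absurd h (by have := eIdx_lt_of_lexlt n h1; omega)
  · exact h1
  · exact absurd h (by have := eIdx_lt_of_lexlt n h1; omega)

lemma eIdx_lt (a : Σ i : Fin m, Fin (n i)) : eIdx n a < ∑ i, n i := by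
  obtain ⟨i, l⟩ := a
  have hl : (l : ℕ) < n i := l.2
  have : (∑ i' ∈ Finset.Iio i, n i') + n i ≤ ∑ i', n i' := by
    calc (∑ i' ∈ Finset.Iio i, n i') + n i = ∑ i' ∈ insert i (Finset.Iio i), n i' := by
          rw [Finset.sum_insert (by simp), add_comm]
      _ ≤ ∑ i', n i' := Finset.sum_le_sum_of_subset (Finset.subset_univ _)
  simp only [eIdx]
  omega

/-- The lexicographic equiv onto `Fin K`. -/
noncomputable def lexEquiv : (Σ i : Fin m, Fin (n i)) ≃ Fin (∑ i, n i) :=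
  Equiv.ofBijective (fun a => ⟨eIdx n a, eIdx_lt n a⟩)
    ((Fintype.bijective_iff_injective_and_card _).mpr
      ⟨fun a b h => eIdx_injective n (by simpa [Fin.ext_iff] using h),
       by simp [Fintype.card_sigma]⟩)

lemma lexEquiv_val (a : Σ i : Fin m, Fin (n i)) : ((lexEquiv n a : Fin (∑ i, n i)) : ℕ) = eIdx n a := rfl

lemma eIdx_lexEquiv_symm (p : Fin (∑ i, n i)) :
    eIdx n ((lexEquiv n).symm p) = (p : ℕ) :=
  congrArg Fin.val (Equiv.apply_symm_apply (lexEquiv n) p)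

lemma lexEquiv_lt_iff (a b : Σ i : Fin m, Fin (n i)) :
    lexEquiv n a < lexEquiv n b ↔ lexlt n a b := by
  constructor
  · intro h
    rcases lexlt_trichotomy n a b with h1 | rfl | h1
    · exact h1
    · exact absurd h (lt_irrefl _)
    · exfalso
      have := eIdx_lt_of_lexlt n h1
      have h2 : eIdx n a < eIdx n b := h
      omega
  · intro h
    exact eIdx_lt_of_lexlt n h

end QDet

namespace QDet
variable {M : Type*} [CommMonoid M]

lemma prod_filter_prod_eq {α β : Type*} [Fintype α] [Fintype β]
    (p : α → β → Prop) [∀ a b, Decidable (p a b)] (f : α → β → M) :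
    ∏ x ∈ (Finset.univ ×ˢ Finset.univ).filter (fun x : α × β => p x.1 x.2), f x.1 x.2
      = ∏ a, ∏ b ∈ Finset.univ.filter (p a), f a b := by
  rw [Finset.prod_filter]
  rw [Finset.prod_product]
  simp_rw [Finset.prod_filter]
variable {m : ℕ} (n : Fin m → ℕ)

lemma Ioi_eq_filter {N : ℕ} (p : Fin N) :
    Finset.Ioi p = Finset.univ.filter (fun p' => p < p') := by
  ext x; simp

lemma filter_sigma_univ {P : (Σ i : Fin m, Fin (n i)) → Prop} [DecidablePred P] :
    Finset.univ.filter P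
      = Finset.univ.sigma (fun i => Finset.univ.filter (fun l => P ⟨i, l⟩)) := by
  ext ⟨i, l⟩; simp

lemma prod_pairs_split (f : (Σ i : Fin m, Fin (n i)) → (Σ i : Fin m, Fin (n i)) → M) :
    ∏ p : Fin (∑ i, n i), ∏ p' ∈ Finset.Ioi p,
        f ((lexEquiv n).symm p) ((lexEquiv n).symm p')
      = (∏ i : Fin m, ∏ l : Fin (n i), ∏ l' ∈ Finset.Ioi l, f ⟨i, l⟩ ⟨i, l'⟩) *
        ∏ j : Fin m, ∏ k ∈ Finset.Ioi j, ∏ lk : Fin (n k), ∏ lj : Fin (n j),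
          f ⟨j, lj⟩ ⟨k, lk⟩ := by
  classical
  -- Step 1: as a product over a filtered product finset on `Fin K × Fin K`
  have h1 : ∏ p : Fin (∑ i, n i), ∏ p' ∈ Finset.Ioi p,
        f ((lexEquiv n).symm p) ((lexEquiv n).symm p')
      = ∏ x ∈ (Finset.univ ×ˢ Finset.univ).filter
            (fun x : Fin (∑ i, n i) × Fin (∑ i, n i) => x.1 < x.2),
          f ((lexEquiv n).symm x.1) ((lexEquiv n).symm x.2) := by
    rw [prod_filter_prod_eq (p := fun (a b : Fin (∑ i, n i)) => a < b)
      (f := fun a b => f ((lexEquiv n).symm a) ((lexEquiv n).symm b))]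
    simp_rw [← Ioi_eq_filter]
  -- Step 2: transport to the sigma type
  have h2 : ∏ x ∈ (Finset.univ ×ˢ Finset.univ).filter
            (fun x : Fin (∑ i, n i) × Fin (∑ i, n i) => x.1 < x.2),
          f ((lexEquiv n).symm x.1) ((lexEquiv n).symm x.2)
      = ∏ x ∈ (Finset.univ ×ˢ Finset.univ).filter
            (fun x : (Σ i : Fin m, Fin (n i)) × (Σ i : Fin m, Fin (n i)) =>
              lexlt n x.1 x.2), f x.1 x.2 := by
    refine Finset.prod_nbij' (fun x => (((lexEquiv n).symm x.1), ((lexEquiv n).symm x.2)))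
      (fun x => ((lexEquiv n x.1), (lexEquiv n x.2))) ?_ ?_ ?_ ?_ ?_
    · intro x hx
      simp only [Finset.mem_filter, Finset.mem_product] at hx ⊢
      refine ⟨⟨Finset.mem_univ _, Finset.mem_univ _⟩, ?_⟩
      have := (lexEquiv_lt_iff n ((lexEquiv n).symm x.1) ((lexEquiv n).symm x.2)).mp
        (by simpa using hx.2)
      exact this
    · intro x hx
      simp only [Finset.mem_filter, Finset.mem_product] at hx ⊢
      exact ⟨⟨Finset.mem_univ _, Finset.mem_univ _⟩, (lexEquiv_lt_iff n _ _).mpr hx.2⟩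
    · intro x _; simp
    · intro x _; simp
    · intro x _; rfl
  rw [h1, h2]
  -- Step 3: split according to whether the first components agree
  rw [← Finset.prod_filter_mul_prod_filter_not _ (fun x => x.1.1 = x.2.1)]
  congr 1
  · -- same-block part
    rw [Finset.filter_filter]
    have hP : ∀ x ∈ (Finset.univ ×ˢ Finset.univ :
        Finset ((Σ i : Fin m, Fin (n i)) × (Σ i : Fin m, Fin (n i)))),
        (lexlt n x.1 x.2 ∧ x.1.1 = x.2.1) ↔ (x.1.1 = x.2.1 ∧ (x.1.2 : ℕ) < (x.2.2 : ℕ)) := by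
      rintro ⟨⟨i, l⟩, ⟨j, k⟩⟩ _
      constructor
      · rintro ⟨hlt, heq⟩
        simp only at heq
        subst heq
        rcases hlt with h | ⟨_, h⟩
        · exact absurd h (lt_irrefl _)
        · exact ⟨rfl, h⟩
      · rintro ⟨heq, hlt⟩
        simp only at heq
        subst heq
        exact ⟨Or.inr ⟨rfl, hlt⟩, rfl⟩
    rw [Finset.filter_congr hP]
    rw [prod_filter_prod_eq (p := fun (a b : Σ i : Fin m, Fin (n i)) =>
      a.1 = b.1 ∧ (a.2 : ℕ) < (b.2 : ℕ)) (f := f)]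
    have key : ∀ a : Σ i : Fin m, Fin (n i),
        ∏ b ∈ Finset.univ.filter
            (fun b : Σ i : Fin m, Fin (n i) => a.1 = b.1 ∧ (a.2 : ℕ) < (b.2 : ℕ)), f a b
          = ∏ l' ∈ Finset.Ioi a.2, f a ⟨a.1, l'⟩ := by
      intro a
      rw [filter_sigma_univ, Finset.prod_sigma]
      rw [Finset.prod_eq_single a.1]
      · congr 1
        ext l'
        simp only [Finset.mem_filter, Finset.mem_univ, Finset.mem_Ioi, true_and]
        exact Fin.lt_def.symm
      · intro i' _ hne
        rw [Finset.filter_false_of_mem, Finset.prod_empty]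
        intro l' _
        rintro ⟨h, -⟩
        exact hne h.symm
      · intro h; exact absurd (Finset.mem_univ a.1) h
    rw [Finset.prod_congr rfl (fun a _ => key a)]
    rw [← Finset.univ_sigma_univ, Finset.prod_sigma]
  · -- cross part
    have hP : ∀ x ∈ (Finset.univ ×ˢ Finset.univ :
        Finset ((Σ i : Fin m, Fin (n i)) × (Σ i : Fin m, Fin (n i)))),
        (lexlt n x.1 x.2 ∧ ¬ x.1.1 = x.2.1) ↔ (x.1.1 < x.2.1) := by
      rintro ⟨⟨i, l⟩, ⟨j, k⟩⟩ _
      constructor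
      · rintro ⟨hlt, hne⟩
        rcases hlt with h | ⟨h, -⟩
        · exact h
        · exact absurd h hne
      · intro h
        exact ⟨Or.inl h, fun he => absurd (he ▸ h) (lt_irrefl _)⟩
    rw [Finset.filter_filter, Finset.filter_congr hP]
    rw [prod_filter_prod_eq (p := fun (a b : Σ i : Fin m, Fin (n i)) => a.1 < b.1) (f := f)]
    have key : ∀ (a : Σ i : Fin m, Fin (n i)),
        ∏ b ∈ Finset.univ.filter (fun b : Σ i : Fin m, Fin (n i) => a.1 < b.1), f a b
        = ∏ k ∈ Finset.Ioi a.1, ∏ lk : Fin (n k), f a ⟨k, lk⟩ := by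
      intro a
      rw [filter_sigma_univ, Finset.prod_sigma]
      calc ∏ k : Fin m, ∏ lk ∈ Finset.univ.filter
              (fun lk : Fin (n k) => a.1 < ((⟨k, lk⟩ : Σ i : Fin m, Fin (n i))).1),
              f a (⟨k, lk⟩ : Σ i : Fin m, Fin (n i))
          = ∏ k : Fin m, if a.1 < k then ∏ lk : Fin (n k), f a ⟨k, lk⟩ else 1 := by
            refine Finset.prod_congr rfl fun k _ => ?_
            by_cases h : a.1 < k
            · rw [if_pos h, Finset.filter_true_of_mem (fun _ _ => h)]
            · rw [if_neg h, Finset.filter_false_of_mem (fun _ _ => h), Finset.prod_empty]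
        _ = ∏ k ∈ Finset.univ.filter (fun k => a.1 < k), ∏ lk : Fin (n k), f a ⟨k, lk⟩ :=
            (Finset.prod_filter _ _).symm
        _ = ∏ k ∈ Finset.Ioi a.1, ∏ lk : Fin (n k), f a ⟨k, lk⟩ := by rw [← Ioi_eq_filter]
    rw [Finset.prod_congr rfl (fun a _ => key a)]
    rw [← Finset.univ_sigma_univ, Finset.prod_sigma]
    refine Finset.prod_congr rfl fun j _ => ?_
    show ∏ l : Fin (n j), ∏ k ∈ Finset.Ioi j, ∏ lk : Fin (n k), f ⟨j, l⟩ ⟨k, lk⟩ = _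
    rw [Finset.prod_comm]
    exact Finset.prod_congr rfl fun k _ => Finset.prod_comm
end QDet


namespace QDet

lemma vandC_eq_det {N : ℕ} (z : Fin N → ℂ) : vandC z = (Matrix.vandermonde z).det :=
  (Matrix.det_vandermonde z).symm

lemma vandC_comp_perm {N : ℕ} (z : Fin N → ℂ) (σ : Equiv.Perm (Fin N)) :
    vandC (fun l => z (σ l)) = ((Equiv.Perm.sign σ : ℤ) : ℂ) * vandC z := by
  rw [vandC_eq_det, vandC_eq_det]
  have h : Matrix.vandermonde (fun l => z (σ l)) = (Matrix.vandermonde z).submatrix σ id := by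
    ext i j; rfl
  rw [h, Matrix.det_permute]

lemma prod_pairs_mul {N : ℕ} (z : Fin N → ℂ) :
    ∏ j : Fin N, ∏ k ∈ Finset.Ioi j, (z j * z k) = ∏ l, z l ^ (N - 1) := by
  have hA : ∏ j : Fin N, ∏ _k ∈ Finset.Ioi j, z j = ∏ j, z j ^ (N - 1 - (j : ℕ)) := by
    refine Finset.prod_congr rfl fun j _ => ?_
    rw [Finset.prod_const, Fin.card_Ioi]
  have hB : (∏ j : Fin N, ∏ k ∈ Finset.Ioi j, z k) = ∏ k, z k ^ (k : ℕ) := by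
    rw [Finset.prod_comm' (t' := Finset.univ) (s' := fun k => Finset.Iio k)
      (fun x y => by simp [and_comm])]
    refine Finset.prod_congr rfl fun k _ => ?_
    rw [Finset.prod_const, Fin.card_Iio]
  calc ∏ j : Fin N, ∏ k ∈ Finset.Ioi j, (z j * z k)
      = (∏ j : Fin N, ∏ _k ∈ Finset.Ioi j, z j) * ∏ j : Fin N, ∏ k ∈ Finset.Ioi j, z k := by
        rw [← Finset.prod_mul_distrib]
        exact Finset.prod_congr rfl fun j _ => Finset.prod_mul_distrib
    _ = ∏ l, z l ^ (N - 1 - (l : ℕ)) * z l ^ (l : ℕ) := by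
        rw [hA, hB, Finset.prod_mul_distrib]
    _ = ∏ l, z l ^ (N - 1) := by
        refine Finset.prod_congr rfl fun l _ => ?_
        rw [← pow_add]
        congr 1
        have := l.2
        omega

lemma vandC_inv {q : ℕ} (hq : 1 ≤ q) (z : Fin (2 * q) → ℂ) (hz : ∀ l, z l ≠ 0) :
    vandC (fun l => (z l)⁻¹)
      = (∏ l, Complex.I * z l ^ (1 - 2 * (q : ℤ))) * vandC z := by
  have hfac : ∀ j k : Fin (2 * q),
      (z k)⁻¹ - (z j)⁻¹ = (z k - z j) * (-1 * (z j * z k)⁻¹) := by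
    intro j k
    rw [inv_sub_inv (hz k) (hz j), div_eq_mul_inv, mul_comm (z k) (z j)]
    ring
  have hS : ∑ j : Fin (2 * q), (2 * q - 1 - (j : ℕ)) = q * (2 * q - 1) := by
    rw [Fin.sum_univ_eq_sum_range]
    have h1 := Finset.sum_range_reflect (fun i => i) (2 * q)
    rw [h1]
    have h2 := Finset.sum_range_id_mul_two (2 * q)
    have h3 : 2 * q * (2 * q - 1) = 2 * (q * (2 * q - 1)) := by
      rw [Nat.mul_assoc]
    omega
  calc vandC (fun l => (z l)⁻¹)
      = ∏ j : Fin (2 * q), ∏ k ∈ Finset.Ioi j, ((z k - z j) * (-1 * (z j * z k)⁻¹)) := by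
        unfold vandC
        exact Finset.prod_congr rfl fun j _ => Finset.prod_congr rfl fun k _ => hfac j k
    _ = vandC z * ((∏ j : Fin (2 * q), ∏ _k ∈ Finset.Ioi j, (-1 : ℂ)) *
          (∏ j : Fin (2 * q), ∏ k ∈ Finset.Ioi j, (z j * z k))⁻¹) := by
        unfold vandC
        rw [← Finset.prod_inv_distrib, ← Finset.prod_mul_distrib, ← Finset.prod_mul_distrib]
        refine Finset.prod_congr rfl fun j _ => ?_
        rw [← Finset.prod_inv_distrib, ← Finset.prod_mul_distrib, ← Finset.prod_mul_distrib]
    _ = vandC z * ((-1 : ℂ) ^ (q * (2 * q - 1)) * (∏ l, z l ^ (2 * q - 1))⁻¹) := by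
        congr 2
        · calc ∏ j : Fin (2 * q), ∏ _k ∈ Finset.Ioi j, (-1 : ℂ)
              = ∏ j : Fin (2 * q), (-1 : ℂ) ^ (2 * q - 1 - (j : ℕ)) := by
                refine Finset.prod_congr rfl fun j _ => ?_
                rw [Finset.prod_const, Fin.card_Ioi]
            _ = (-1 : ℂ) ^ (∑ j : Fin (2 * q), (2 * q - 1 - (j : ℕ))) := by
                rw [Finset.prod_pow_eq_pow_sum]
            _ = (-1 : ℂ) ^ (q * (2 * q - 1)) := by rw [hS]
        · rw [prod_pairs_mul]
    _ = (∏ l, Complex.I * z l ^ (1 - 2 * (q : ℤ))) * vandC z := by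
        rw [Finset.prod_mul_distrib]
        have hI : (∏ _l : Fin (2 * q), Complex.I) = (-1 : ℂ) ^ q := by
          rw [Finset.prod_const, Finset.card_univ, Fintype.card_fin, pow_mul, Complex.I_sq]
        have hsgn : ((-1 : ℂ)) ^ (q * (2 * q - 1)) = (-1 : ℂ) ^ q := by
          rcases Nat.even_or_odd q with h | h
          · rw [Even.neg_one_pow (h.mul_right _), Even.neg_one_pow h]
          · rw [Odd.neg_one_pow (h.mul ⟨q - 1, by omega⟩), Odd.neg_one_pow h]
        have hz2 : ∏ l, z l ^ (1 - 2 * (q : ℤ)) = (∏ l, z l ^ (2 * q - 1))⁻¹ := by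
          rw [← Finset.prod_inv_distrib]
          refine Finset.prod_congr rfl fun l _ => ?_
          rw [← zpow_natCast (z l) (2 * q - 1), ← zpow_neg]
          congr 1
          omega
        rw [hI, hsgn, hz2]
        ring

end QDet

namespace QDet

/-- Pointwise expansion used in the Andréief identity. -/
lemma pointwise_expand {ι : Type*} [Fintype ι] [DecidableEq ι]
    (F G : ι → ℝ → ℂ) (t : ι → ℝ) :
    ∑ σ : Equiv.Perm ι, ((Equiv.Perm.sign σ : ℤ) : ℂ) *
        ∏ i, (F i (t i) * G (σ i) (t i))
      = (∏ i, F i (t i)) * Matrix.det (Matrix.of fun b a => G b (t a)) := by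
  rw [Matrix.det_apply']
  rw [Finset.mul_sum]
  refine Finset.sum_congr rfl fun σ _ => ?_
  rw [Finset.prod_mul_distrib]
  simp only [Matrix.of_apply]
  ring

/-- Andréief-type identity. -/
lemma andreief {ι : Type*} [Fintype ι] [DecidableEq ι]
    (F G : ι → ℝ → ℂ) (hFG : ∀ a b, Integrable (fun x => F a x * G b x)) :
    Matrix.det (Matrix.of fun a b => ∫ x : ℝ, F a x * G b x)
      = ∫ t : ι → ℝ, (∏ i, F i (t i)) * Matrix.det (Matrix.of fun b a => G b (t a)) := by
  rw [← Matrix.det_transpose]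
  rw [Matrix.det_apply']
  simp only [Matrix.transpose_apply, Matrix.of_apply]
  calc ∑ σ : Equiv.Perm ι, ((Equiv.Perm.sign σ : ℤ) : ℂ) * ∏ i, ∫ x : ℝ, F i x * G (σ i) x
      = ∑ σ : Equiv.Perm ι, ∫ t : ι → ℝ, ((Equiv.Perm.sign σ : ℤ) : ℂ) *
          ∏ i, (F i (t i) * G (σ i) (t i)) := by
        refine Finset.sum_congr rfl fun σ _ => ?_
        rw [← MeasureTheory.integral_fintype_prod_eq_prod (f := fun i x => F i x * G (σ i) x),
          ← MeasureTheory.integral_const_mul, ← MeasureTheory.volume_pi]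
    _ = ∫ t : ι → ℝ, ∑ σ : Equiv.Perm ι, ((Equiv.Perm.sign σ : ℤ) : ℂ) *
          ∏ i, (F i (t i) * G (σ i) (t i)) := by
        rw [MeasureTheory.integral_finset_sum]
        intro σ _
        exact (MeasureTheory.Integrable.fintype_prod
          (f := fun i x => F i x * G (σ i) x) (fun i => hFG i (σ i))).const_mul _
    _ = ∫ t : ι → ℝ, (∏ i, F i (t i)) * Matrix.det (Matrix.of fun b a => G b (t a)) := by
        refine MeasureTheory.integral_congr_ae (Filter.Eventually.of_forall fun t => ?_)
        exact pointwise_expand F G t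

/-- Integrability of the Andréief integrand. -/
lemma andreief_integrable {ι : Type*} [Fintype ι] [DecidableEq ι]
    (F G : ι → ℝ → ℂ) (hFG : ∀ a b, Integrable (fun x => F a x * G b x)) :
    Integrable (fun t : ι → ℝ =>
      (∏ i, F i (t i)) * Matrix.det (Matrix.of fun b a => G b (t a))) := by
  have : (fun t : ι → ℝ => (∏ i, F i (t i)) * Matrix.det (Matrix.of fun b a => G b (t a)))
      = fun t => ∑ σ : Equiv.Perm ι, ((Equiv.Perm.sign σ : ℤ) : ℂ) *
          ∏ i, (F i (t i) * G (σ i) (t i)) := by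
    funext t
    exact (pointwise_expand F G t).symm
  rw [this]
  exact integrable_finset_sum _ fun σ _ =>
    (MeasureTheory.Integrable.fintype_prod
      (f := fun i x => F i x * G (σ i) x) (fun i => hFG i (σ i))).const_mul _

end QDet


namespace QDet

lemma sum_perm_monomial {N : ℕ} (z : Fin N → ℂ) :
    ∑ τ : Equiv.Perm (Fin N), ((Equiv.Perm.sign τ : ℤ) : ℂ) * ∏ l, z (τ l) ^ (l : ℕ)
      = vandC z := by
  rw [vandC_eq_det, Matrix.det_apply']
  rfl

lemma sum_families {m : ℕ} {n : Fin m → ℕ} (g : ∀ i : Fin m, Equiv.Perm (Fin (n i)) → ℂ) :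
    ∑ σ : ∀ i : Fin m, Equiv.Perm (Fin (n i)), ∏ i, g i (σ i)
      = ∏ i, ∑ τ : Equiv.Perm (Fin (n i)), g i τ := by
  classical
  rw [Finset.prod_univ_sum]
  rw [Fintype.piFinset_univ]

lemma integral_comp_perm {ι : Type*} [Fintype ι] (π : Equiv.Perm ι) (f : (ι → ℝ) → ℂ) :
    ∫ t : ι → ℝ, f (fun b => t (π b)) = ∫ t : ι → ℝ, f t := by
  have key : ∀ t : ι → ℝ,
      ((MeasurableEquiv.piCongrLeft (fun _ : ι => ℝ) π.symm) t) = fun b => t (π b) := by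
    intro t
    funext b
    show (Equiv.piCongrLeft (fun _ : ι => ℝ) π.symm) t b = t (π b)
    conv_lhs => rw [show b = π.symm (π b) by simp]
    exact Equiv.piCongrLeft_apply_apply (fun _ => ℝ) π.symm t (π b)
  have h := (MeasureTheory.volume_measurePreserving_piCongrLeft (fun _ : ι => ℝ)
    π.symm).integral_comp' f
  calc ∫ t : ι → ℝ, f (fun b => t (π b))
      = ∫ t : ι → ℝ, f ((MeasurableEquiv.piCongrLeft (fun _ : ι => ℝ) π.symm) t) := by
        refine integral_congr_ae (Filter.Eventually.of_forall fun t => ?_)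
        show f _ = f _
        rw [key]
    _ = ∫ t : ι → ℝ, f t := h

lemma integrable_comp_perm {ι : Type*} [Fintype ι] (π : Equiv.Perm ι) {f : (ι → ℝ) → ℂ}
    (hf : Integrable f) : Integrable (fun t : ι → ℝ => f (fun b => t (π b))) := by
  have key : ∀ t : ι → ℝ,
      ((MeasurableEquiv.piCongrLeft (fun _ : ι => ℝ) π.symm) t) = fun b => t (π b) := by
    intro t
    funext b
    show (Equiv.piCongrLeft (fun _ : ι => ℝ) π.symm) t b = t (π b)
    conv_lhs => rw [show b = π.symm (π b) by simp]
    exact Equiv.piCongrLeft_apply_apply (fun _ => ℝ) π.symm t (π b)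
  have h := (MeasureTheory.volume_measurePreserving_piCongrLeft (fun _ : ι => ℝ)
      π.symm).integrable_comp_emb (MeasurableEquiv.measurableEmbedding _) (g := f)
  have : Integrable (f ∘ (MeasurableEquiv.piCongrLeft (fun _ : ι => ℝ) π.symm)) := by
    rw [h]; exact hf
  have heq : (f ∘ (MeasurableEquiv.piCongrLeft (fun _ : ι => ℝ) π.symm))
      = fun t : ι → ℝ => f (fun b => t (π b)) := by
    funext t
    simp only [Function.comp_apply, key]
  rwa [heq] at this

end QDet
namespace QDet

variable {m : ℕ} (q : Fin m → ℕ) (δ : ℤ) (c : ℂ) (Z : ℝ → ℂ) (W : Fin m → ℝ → ℂ)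

noncomputable def Ff : (Σ i : Fin m, Fin (2 * q i)) → ℝ → ℂ := fun s x => W s.1 x * Z x ^ (s.2 : ℕ)

noncomputable def Gg : (Σ i : Fin m, Fin (2 * q i)) → ℝ → ℂ :=
  fun r x => (Z x ^ δ + c) ^ ((∑ i' ∈ Finset.Iio r.1, 2 * q i') + (r.2 : ℕ))

noncomputable def CrossP (t : (Σ i : Fin m, Fin (2 * q i)) → ℝ) : ℂ :=
  ∏ j : Fin m, ∏ k ∈ Finset.Ioi j, ∏ lk : Fin (2 * q k), ∏ lj : Fin (2 * q j),
    (Z (t ⟨k, lk⟩) ^ δ - Z (t ⟨j, lj⟩) ^ δ)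

noncomputable def Phi (t : (Σ i : Fin m, Fin (2 * q i)) → ℝ) : ℂ :=
  (∏ s : Σ i : Fin m, Fin (2 * q i), Ff q Z W s (t s)) *
    ((∏ i : Fin m, vandC (fun l : Fin (2 * q i) => Z (t ⟨i, l⟩) ^ δ)) * CrossP q δ Z t)

lemma detG_eq (t : (Σ i : Fin m, Fin (2 * q i)) → ℝ) :
    Matrix.det (Matrix.of fun b a : Σ i : Fin m, Fin (2 * q i) => Gg q δ c Z b (t a))
      = (∏ i : Fin m, vandC (fun l : Fin (2 * q i) => Z (t ⟨i, l⟩) ^ δ)) * CrossP q δ Z t := by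
  have h1 : Matrix.det (Matrix.of fun b a : Σ i : Fin m, Fin (2 * q i) => Gg q δ c Z b (t a))
      = Matrix.det (Matrix.reindex (lexEquiv fun i => 2 * q i) (lexEquiv fun i => 2 * q i)
          (Matrix.of fun b a : Σ i : Fin m, Fin (2 * q i) => Gg q δ c Z b (t a))) :=
    (Matrix.det_reindex_self _ _).symm
  rw [h1]
  have h2 : Matrix.reindex (lexEquiv fun i => 2 * q i) (lexEquiv fun i => 2 * q i)
        (Matrix.of fun b a : Σ i : Fin m, Fin (2 * q i) => Gg q δ c Z b (t a))
      = (Matrix.vandermonde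
          (fun p' => Z (t ((lexEquiv fun i => 2 * q i).symm p')) ^ δ + c)).transpose := by
    ext p p'
    show (Z (t ((lexEquiv fun i => 2 * q i).symm p')) ^ δ + c)
        ^ (eIdx (fun i => 2 * q i) ((lexEquiv fun i => 2 * q i).symm p))
      = (Z (t ((lexEquiv fun i => 2 * q i).symm p')) ^ δ + c) ^ (p : ℕ)
    rw [eIdx_lexEquiv_symm]
  rw [h2, Matrix.det_transpose, Matrix.det_vandermonde]
  have h3 : ∀ p : Fin (∑ i, 2 * q i), ∀ p' ∈ Finset.Ioi p,
      (Z (t ((lexEquiv fun i => 2 * q i).symm p')) ^ δ + c)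
        - (Z (t ((lexEquiv fun i => 2 * q i).symm p)) ^ δ + c)
      = Z (t ((lexEquiv fun i => 2 * q i).symm p')) ^ δ
        - Z (t ((lexEquiv fun i => 2 * q i).symm p)) ^ δ :=
    fun p p' _ => add_sub_add_right_eq_sub _ _ _
  rw [Finset.prod_congr rfl (fun p _ => Finset.prod_congr rfl (h3 p))]
  exact prod_pairs_split (fun i => 2 * q i)
    (fun a b => Z (t b) ^ δ - Z (t a) ^ δ)

lemma det_eq_int_Phi
    (hint1 : ∀ a b : Σ i : Fin m, Fin (2 * q i),
      MeasureTheory.Integrable (fun x : ℝ => Ff q Z W a x * Gg q δ c Z b x)) :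
    Matrix.det (Matrix.of fun scol srow : Σ i : Fin m, Fin (2 * q i) =>
        ∫ x : ℝ, Ff q Z W scol x * Gg q δ c Z srow x)
      = ∫ t : (Σ i : Fin m, Fin (2 * q i)) → ℝ, Phi q δ Z W t := by
  rw [andreief (Ff q Z W) (Gg q δ c Z) hint1]
  refine MeasureTheory.integral_congr_ae (Filter.Eventually.of_forall fun t => ?_)
  show _ = Phi q δ Z W t
  unfold Phi
  dsimp only
  rw [detG_eq]

lemma Phi_integrable
    (hint1 : ∀ a b : Σ i : Fin m, Fin (2 * q i),
      MeasureTheory.Integrable (fun x : ℝ => Ff q Z W a x * Gg q δ c Z b x)) :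
    MeasureTheory.Integrable (fun t : (Σ i : Fin m, Fin (2 * q i)) → ℝ => Phi q δ Z W t) := by
  have h := andreief_integrable (Ff q Z W) (Gg q δ c Z) hint1
  have heq : (fun t : (Σ i : Fin m, Fin (2 * q i)) → ℝ =>
      (∏ i : Σ i : Fin m, Fin (2 * q i), Ff q Z W i (t i)) *
        Matrix.det (Matrix.of fun b a => Gg q δ c Z b (t a)))
      = fun t => Phi q δ Z W t := by
    funext t
    unfold Phi
    rw [detG_eq]
  rwa [heq] at h

lemma Phi_comp_perm (t : (Σ i : Fin m, Fin (2 * q i)) → ℝ)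
    (σ : ∀ i : Fin m, Equiv.Perm (Fin (2 * q i))) :
    Phi q δ Z W (fun b => t (Equiv.sigmaCongrRight σ b))
      = ((∏ s : Σ i : Fin m, Fin (2 * q i), W s.1 (t s)) *
          ((∏ i : Fin m, vandC (fun l : Fin (2 * q i) => Z (t ⟨i, l⟩) ^ δ)) *
            CrossP q δ Z t)) *
        ∏ i : Fin m, (((Equiv.Perm.sign (σ i) : ℤ) : ℂ) *
          ∏ l : Fin (2 * q i), Z (t ⟨i, σ i l⟩) ^ (l : ℕ)) := by
  unfold Phi
  have pW : (∏ s : Σ i : Fin m, Fin (2 * q i),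
        Ff q Z W s (t (Equiv.sigmaCongrRight σ s)))
      = (∏ s : Σ i : Fin m, Fin (2 * q i), W s.1 (t s)) *
        ∏ i : Fin m, ∏ l : Fin (2 * q i), Z (t ⟨i, σ i l⟩) ^ (l : ℕ) := by
    unfold Ff
    rw [Finset.prod_mul_distrib]
    congr 1
    · exact Equiv.prod_comp (Equiv.sigmaCongrRight σ) (fun b => W b.1 (t b))
    · rw [← Finset.univ_sigma_univ, Finset.prod_sigma]
      rfl
  have pV : ∀ i : Fin m,
      vandC (fun l : Fin (2 * q i) => Z (t (Equiv.sigmaCongrRight σ ⟨i, l⟩)) ^ δ)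
        = ((Equiv.Perm.sign (σ i) : ℤ) : ℂ) *
          vandC (fun l : Fin (2 * q i) => Z (t ⟨i, l⟩) ^ δ) := by
    intro i
    exact vandC_comp_perm (fun l : Fin (2 * q i) => Z (t ⟨i, l⟩) ^ δ) (σ i)
  have pC : CrossP q δ Z (fun b => t (Equiv.sigmaCongrRight σ b)) = CrossP q δ Z t := by
    unfold CrossP
    refine Finset.prod_congr rfl fun j _ => Finset.prod_congr rfl fun k _ => ?_
    refine Fintype.prod_equiv (σ k)
      (fun lk => ∏ lj : Fin (2 * q j),
        (Z (t ⟨k, σ k lk⟩) ^ δ - Z (t ⟨j, σ j lj⟩) ^ δ))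
      (fun lk => ∏ lj : Fin (2 * q j),
        (Z (t ⟨k, lk⟩) ^ δ - Z (t ⟨j, lj⟩) ^ δ)) ?_
    intro lk
    refine Fintype.prod_equiv (σ j) _ _ ?_
    intro lj
    rfl
  rw [pW, Finset.prod_congr rfl (fun i _ => pV i), pC, Finset.prod_mul_distrib,
    Finset.prod_mul_distrib]
  ring

lemma sum_Phi (t : (Σ i : Fin m, Fin (2 * q i)) → ℝ) :
    ∑ σ : ∀ i : Fin m, Equiv.Perm (Fin (2 * q i)),
        Phi q δ Z W (fun b => t (Equiv.sigmaCongrRight σ b))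
      = (∏ s : Σ i : Fin m, Fin (2 * q i), W s.1 (t s)) *
          ((∏ i : Fin m, vandC (fun l : Fin (2 * q i) => Z (t ⟨i, l⟩))) *
            ((∏ i : Fin m, vandC (fun l : Fin (2 * q i) => Z (t ⟨i, l⟩) ^ δ)) *
              CrossP q δ Z t)) := by
  rw [Finset.sum_congr rfl (fun σ _ => Phi_comp_perm q δ Z W t σ)]
  rw [← Finset.mul_sum]
  rw [sum_families (fun i τ => ((Equiv.Perm.sign τ : ℤ) : ℂ) *
    ∏ l : Fin (2 * q i), Z (t ⟨i, τ l⟩) ^ (l : ℕ))]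
  rw [Finset.prod_congr rfl (fun i _ => sum_perm_monomial (fun l : Fin (2 * q i) => Z (t ⟨i, l⟩)))]
  ring

lemma scaled_int (hq : ∀ i, 1 ≤ q i)
    (hint1 : ∀ a b : Σ i : Fin m, Fin (2 * q i),
      MeasureTheory.Integrable (fun x : ℝ => Ff q Z W a x * Gg q δ c Z b x)) :
    (∏ i : Fin m, (((2 * q i).factorial : ℂ))) *
        ∫ t : (Σ i : Fin m, Fin (2 * q i)) → ℝ, Phi q δ Z W t
      = ∫ t : (Σ i : Fin m, Fin (2 * q i)) → ℝ,
          (∏ s : Σ i : Fin m, Fin (2 * q i), W s.1 (t s)) *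
          ((∏ i : Fin m, vandC (fun l : Fin (2 * q i) => Z (t ⟨i, l⟩))) *
            ((∏ i : Fin m, vandC (fun l : Fin (2 * q i) => Z (t ⟨i, l⟩) ^ δ)) *
              CrossP q δ Z t)) := by
  classical
  have hcard : (∏ i : Fin m, (((2 * q i).factorial : ℂ)))
      = (Fintype.card (∀ i : Fin m, Equiv.Perm (Fin (2 * q i))) : ℂ) := by
    rw [Fintype.card_pi]
    push_cast
    refine Finset.prod_congr rfl fun i _ => ?_
    rw [Fintype.card_perm, Fintype.card_fin]
  rw [hcard]
  calc (Fintype.card (∀ i : Fin m, Equiv.Perm (Fin (2 * q i))) : ℂ) *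
        ∫ t : (Σ i : Fin m, Fin (2 * q i)) → ℝ, Phi q δ Z W t
      = ∑ _σ : ∀ i : Fin m, Equiv.Perm (Fin (2 * q i)),
          ∫ t : (Σ i : Fin m, Fin (2 * q i)) → ℝ, Phi q δ Z W t := by
        rw [Finset.sum_const, Finset.card_univ, nsmul_eq_mul]
    _ = ∑ σ : ∀ i : Fin m, Equiv.Perm (Fin (2 * q i)),
          ∫ t : (Σ i : Fin m, Fin (2 * q i)) → ℝ,
            Phi q δ Z W (fun b => t (Equiv.sigmaCongrRight σ b)) := by
        refine Finset.sum_congr rfl fun σ _ => ?_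
        rw [integral_comp_perm (Equiv.sigmaCongrRight σ) (Phi q δ Z W)]
    _ = ∫ t : (Σ i : Fin m, Fin (2 * q i)) → ℝ,
          ∑ σ : ∀ i : Fin m, Equiv.Perm (Fin (2 * q i)),
            Phi q δ Z W (fun b => t (Equiv.sigmaCongrRight σ b)) := by
        rw [MeasureTheory.integral_finset_sum]
        intro σ _
        exact integrable_comp_perm (Equiv.sigmaCongrRight σ) (Phi_integrable q δ c Z W hint1)
    _ = _ := by
        refine MeasureTheory.integral_congr_ae (Filter.Eventually.of_forall fun t => ?_)
        exact sum_Phi q δ Z W t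

lemma Xi_eq_Big (hδ : δ = 1 ∨ δ = -1) (hq : ∀ i, 1 ≤ q i) (hZ : ∀ x, Z x ≠ 0)
    (t : (Σ i : Fin m, Fin (2 * q i)) → ℝ) :
    (∏ s : Σ i : Fin m, Fin (2 * q i), W s.1 (t s)) *
        ((∏ i : Fin m, vandC (fun l : Fin (2 * q i) => Z (t ⟨i, l⟩))) *
          ((∏ i : Fin m, vandC (fun l : Fin (2 * q i) => Z (t ⟨i, l⟩) ^ δ)) *
            CrossP q δ Z t))
      = (∏ s : Σ i : Fin m, Fin (2 * q i),
            W s.1 (t s) * (if δ = 1 then 1 else Complex.I * Z (t s) ^ (1 - 2 * (q s.1 : ℤ)))) *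
          (∏ i : Fin m, vandC (fun l : Fin (2 * q i) => Z (t ⟨i, l⟩)) ^ 2) *
          CrossP q δ Z t := by
  rcases hδ with rfl | rfl
  · have hb : (∏ s : Σ i : Fin m, Fin (2 * q i),
          W s.1 (t s) * (if (1 : ℤ) = 1 then (1 : ℂ)
            else Complex.I * Z (t s) ^ (1 - 2 * (q s.1 : ℤ))))
        = ∏ s : Σ i : Fin m, Fin (2 * q i), W s.1 (t s) :=
      Finset.prod_congr rfl fun s _ => by rw [if_pos rfl, mul_one]
    have hv : (∏ i : Fin m, vandC (fun l : Fin (2 * q i) => Z (t ⟨i, l⟩) ^ (1 : ℤ)))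
        = ∏ i : Fin m, vandC (fun l : Fin (2 * q i) => Z (t ⟨i, l⟩)) := by
      refine Finset.prod_congr rfl fun i _ => ?_
      congr 1
      funext l
      exact zpow_one _
    rw [hb, hv, Finset.prod_pow]
    ring
  · have hfalse : ¬ ((-1 : ℤ) = 1) := by decide
    have hsig : (∏ s : Σ i : Fin m, Fin (2 * q i),
          (Complex.I * Z (t s) ^ (1 - 2 * (q s.1 : ℤ))))
        = ∏ i : Fin m, ∏ l : Fin (2 * q i),
            (Complex.I * Z (t ⟨i, l⟩) ^ (1 - 2 * (q i : ℤ))) := by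
      rw [← Finset.univ_sigma_univ, Finset.prod_sigma]
    have hb : (∏ s : Σ i : Fin m, Fin (2 * q i),
          W s.1 (t s) * (if (-1 : ℤ) = 1 then (1 : ℂ)
            else Complex.I * Z (t s) ^ (1 - 2 * (q s.1 : ℤ))))
        = (∏ s : Σ i : Fin m, Fin (2 * q i), W s.1 (t s)) *
            ∏ i : Fin m, ∏ l : Fin (2 * q i),
              (Complex.I * Z (t ⟨i, l⟩) ^ (1 - 2 * (q i : ℤ))) := by
      rw [← hsig, ← Finset.prod_mul_distrib]
      exact Finset.prod_congr rfl fun s _ => by rw [if_neg hfalse]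
    have hv : (∏ i : Fin m, vandC (fun l : Fin (2 * q i) => Z (t ⟨i, l⟩) ^ (-1 : ℤ)))
        = (∏ i : Fin m, ∏ l : Fin (2 * q i),
            (Complex.I * Z (t ⟨i, l⟩) ^ (1 - 2 * (q i : ℤ)))) *
          ∏ i : Fin m, vandC (fun l : Fin (2 * q i) => Z (t ⟨i, l⟩)) := by
      rw [← Finset.prod_mul_distrib]
      refine Finset.prod_congr rfl fun i _ => ?_
      have h1 : (fun l : Fin (2 * q i) => Z (t ⟨i, l⟩) ^ (-1 : ℤ))
          = fun l => (Z (t ⟨i, l⟩))⁻¹ := by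
        funext l
        exact zpow_neg_one _
      rw [h1]
      exact vandC_inv (hq i) (fun l => Z (t ⟨i, l⟩)) (fun l => hZ _)
    rw [hb, hv, Finset.prod_pow]
    ring

end QDet

/-- the q-determinant lemma.  The `K × K` determinant, with rows `j`
and columns indexed lexicographically by pairs `(i, l_i)` (both encoded by the sigma
type `Σ i, Fin (2 q i)`, a row `⟨i,l⟩` corresponding to `j - 1 = τ(i) + l`), whose
`((i,l),j)` entry is `∫ W_i(t) Z(t)^l (Z(t)^δ + c)^{j-1} dt`, equals
`∏_i (1/(2q_i)!)` times the `K`-fold integral of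
`∏ W·b_{δ,q_i}(Z) · ∏_i Δ_{2q_i}(Z-block)² · ∏_{j<k} ∏∏ (Z^δ - Z^δ)`. -/
theorem qdet_lemma
    (m : ℕ) (hm : 1 ≤ m) (q : Fin m → ℕ) (hq : ∀ i, 1 ≤ q i)
    (δ : ℤ) (hδ : δ = 1 ∨ δ = -1) (c : ℂ)
    (Z : ℝ → ℂ) (hZ : ∀ t, Z t ≠ 0) (hZm : Measurable Z)
    (W : Fin m → ℝ → ℂ) (hW : ∀ i, Measurable (W i))
    (hint1 : ∀ s srow : Σ i : Fin m, Fin (2 * q i),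
        Integrable (fun t : ℝ => W s.1 t * Z t ^ (s.2 : ℕ) *
          (Z t ^ δ + c) ^ ((∑ i' ∈ Finset.Iio srow.1, 2 * q i') + (srow.2 : ℕ))))
    (hint2 : Integrable (fun t : (Σ i : Fin m, Fin (2 * q i)) → ℝ =>
        (∏ s : Σ i : Fin m, Fin (2 * q i),
            W s.1 (t s) * (if δ = 1 then 1 else Complex.I * Z (t s) ^ (1 - 2 * (q s.1 : ℤ)))) *
          (∏ i : Fin m, vandC (fun l : Fin (2 * q i) => Z (t ⟨i, l⟩)) ^ 2) *
          ∏ j : Fin m, ∏ k ∈ Finset.Ioi j, ∏ lk : Fin (2 * q k), ∏ lj : Fin (2 * q j),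
            (Z (t ⟨k, lk⟩) ^ δ - Z (t ⟨j, lj⟩) ^ δ))) :
    Matrix.det (Matrix.of
        fun scol srow : Σ i : Fin m, Fin (2 * q i) =>
          ∫ t : ℝ, W scol.1 t * Z t ^ (scol.2 : ℕ) *
            (Z t ^ δ + c) ^ ((∑ i' ∈ Finset.Iio srow.1, 2 * q i') + (srow.2 : ℕ)))
      = (∏ i : Fin m, (((2 * q i).factorial : ℂ))⁻¹) *
          ∫ t : (Σ i : Fin m, Fin (2 * q i)) → ℝ,
            (∏ s : Σ i : Fin m, Fin (2 * q i),
                W s.1 (t s) * (if δ = 1 then 1 else Complex.I * Z (t s) ^ (1 - 2 * (q s.1 : ℤ)))) *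
              (∏ i : Fin m, vandC (fun l : Fin (2 * q i) => Z (t ⟨i, l⟩)) ^ 2) *
              ∏ j : Fin m, ∏ k ∈ Finset.Ioi j, ∏ lk : Fin (2 * q k), ∏ lj : Fin (2 * q j),
                (Z (t ⟨k, lk⟩) ^ δ - Z (t ⟨j, lj⟩) ^ δ) := by
  classical
  have hint1' : ∀ a b : Σ i : Fin m, Fin (2 * q i),
      Integrable (fun x : ℝ => QDet.Ff q Z W a x * QDet.Gg q δ c Z b x) :=
    fun a b => hint1 a b
  have h2 := QDet.det_eq_int_Phi q δ c Z W hint1'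
  have h5 := QDet.scaled_int q δ c Z W hq hint1'
  have h6 : (∫ t : (Σ i : Fin m, Fin (2 * q i)) → ℝ,
        (∏ s : Σ i : Fin m, Fin (2 * q i), W s.1 (t s)) *
          ((∏ i : Fin m, vandC (fun l : Fin (2 * q i) => Z (t ⟨i, l⟩))) *
            ((∏ i : Fin m, vandC (fun l : Fin (2 * q i) => Z (t ⟨i, l⟩) ^ δ)) *
              QDet.CrossP q δ Z t)))
      = ∫ t : (Σ i : Fin m, Fin (2 * q i)) → ℝ,
          (∏ s : Σ i : Fin m, Fin (2 * q i),
              W s.1 (t s) * (if δ = 1 then 1 else Complex.I * Z (t s) ^ (1 - 2 * (q s.1 : ℤ)))) *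
            (∏ i : Fin m, vandC (fun l : Fin (2 * q i) => Z (t ⟨i, l⟩)) ^ 2) *
            QDet.CrossP q δ Z t := by
    refine MeasureTheory.integral_congr_ae (Filter.Eventually.of_forall fun t => ?_)
    exact QDet.Xi_eq_Big q δ Z W hδ hq hZ t
  have hfac : ∀ i : Fin m, (((2 * q i).factorial : ℂ)) ≠ 0 :=
    fun i => Nat.cast_ne_zero.mpr (Nat.factorial_ne_zero _)
  calc Matrix.det (Matrix.of
        fun scol srow : Σ i : Fin m, Fin (2 * q i) =>
          ∫ t : ℝ, W scol.1 t * Z t ^ (scol.2 : ℕ) *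
            (Z t ^ δ + c) ^ ((∑ i' ∈ Finset.Iio srow.1, 2 * q i') + (srow.2 : ℕ)))
      = ∫ t : (Σ i : Fin m, Fin (2 * q i)) → ℝ, QDet.Phi q δ Z W t := h2
    _ = (∏ i : Fin m, (((2 * q i).factorial : ℂ))⁻¹) *
          ((∏ i : Fin m, (((2 * q i).factorial : ℂ))) *
            ∫ t : (Σ i : Fin m, Fin (2 * q i)) → ℝ, QDet.Phi q δ Z W t) := by
        rw [← mul_assoc, ← Finset.prod_mul_distrib,
          Finset.prod_congr rfl (fun i _ => inv_mul_cancel₀ (hfac i)),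
          Finset.prod_const_one, one_mul]
    _ = _ := by
        rw [h5, h6]
        rfl
end

section
/- (Mehta/Selberg integral.) For every p ∈ ℕ with p ≥ 1 and every real a > 0, ∫_{ℝ^p} Δ_p(x)² · ∏_{l=1}^p e^{−a x_l²} dx = (π / 2^{p−1})^{p/2} · a^{−p²/2} · ∏_{l=1}^p l!. -/
open MeasureTheory Finset

/-- The Vandermonde product for a real tuple. -/
noncomputable def vandR {n : ℕ} (z : Fin n → ℝ) : ℝ :=
  ∏ j : Fin n, ∏ k ∈ Finset.Ioi j, (z k - z j)

open Polynomial

noncomputable def Gg (k : ℕ) : ℝ → ℝ := fun x =>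
  (-1 : ℝ) ^ k * (Polynomial.aeval x (Polynomial.hermite k)) * Real.exp (-(x ^ 2 / 2))

lemma integrable_poly_gauss (P : ℝ[X]) :
    Integrable fun x : ℝ => P.eval x * Real.exp (-(x ^ 2 / 2)) := by
  induction P using Polynomial.induction_on' with
  | add p q hp hq => simpa [add_mul, Pi.add_def] using hp.add hq
  | monomial n c =>
      have h : Integrable fun x : ℝ => x ^ n * Real.exp (-(x ^ 2 / 2)) := by
        have h2 := integrable_rpow_mul_exp_neg_mul_sq (b := 1/2) (by norm_num)
          (s := (n : ℝ)) (by exact_mod_cast neg_one_lt_zero.trans_le (Nat.cast_nonneg n))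
        have heq : (fun x : ℝ => x ^ (n:ℝ) * Real.exp (-(1/2) * x ^ 2))
            = fun x : ℝ => x ^ n * Real.exp (-(x ^ 2 / 2)) := by
          funext x
          rw [Real.rpow_natCast]
          congr 2
          ring
        rw [← heq]
        exact h2
      simpa [eval_monomial, mul_assoc] using h.const_mul c

lemma aeval_hermite_eq (k : ℕ) (x : ℝ) :
    (Polynomial.aeval x (Polynomial.hermite k) : ℝ)
      = ((Polynomial.hermite k).map (Int.castRingHom ℝ)).eval x := by
  rw [Polynomial.aeval_def, Polynomial.eval₂_eq_eval_map]
  norm_num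

lemma integrable_poly_G (P : ℝ[X]) (k : ℕ) :
    Integrable fun x : ℝ => P.eval x * Gg k x := by
  have : (fun x : ℝ => P.eval x * Gg k x)
      = fun x => (-1:ℝ)^k * ((P * (Polynomial.hermite k).map (Int.castRingHom ℝ)).eval x
          * Real.exp (-(x ^ 2 / 2))) := by
    funext x
    rw [Gg, aeval_hermite_eq, Polynomial.eval_mul]
    ring
  rw [this]
  exact (integrable_poly_gauss _).const_mul _

lemma hasDerivAt_Gg (k : ℕ) (x : ℝ) : HasDerivAt (Gg k) (Gg (k+1) x) x := by
  have h1 : HasDerivAt (fun y : ℝ => -(y ^ 2 / 2)) (-x) x := by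
    have := ((hasDerivAt_pow 2 x).div_const 2).neg
    simp at this
    exact this
  have hg : HasDerivAt (fun y : ℝ => Real.exp (-(y ^ 2 / 2)))
      (Real.exp (-(x ^ 2 / 2)) * -x) x := h1.exp
  have hp : HasDerivAt (fun y : ℝ => (Polynomial.aeval y (Polynomial.hermite k) : ℝ))
      (Polynomial.aeval x (Polynomial.derivative (Polynomial.hermite k))) x := by
    have h := ((Polynomial.differentiable_aeval (R := ℤ) (Polynomial.hermite k)) x).hasDerivAt
    rwa [Polynomial.deriv_aeval] at h
  have key : Gg (k+1) x = (-1:ℝ)^k *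
      ((Polynomial.aeval x (Polynomial.derivative (Polynomial.hermite k))) * Real.exp (-(x^2/2))
        + (Polynomial.aeval x (Polynomial.hermite k)) * (Real.exp (-(x^2/2)) * -x)) := by
    simp only [Gg, Polynomial.hermite_succ, map_sub, map_mul, Polynomial.aeval_X, pow_succ]
    ring
  rw [key]
  have h2 : (fun y : ℝ => (-1:ℝ)^k * ((Polynomial.aeval y (Polynomial.hermite k)) *
      Real.exp (-(y ^ 2 / 2)))) = Gg k := by
    funext y
    rw [Gg]
    ring
  have := (hp.mul hg).const_mul ((-1:ℝ)^k)
  rw [← h2]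
  exact this

lemma ibp_step (P : ℝ[X]) (k : ℕ) :
    ∫ x : ℝ, P.eval x * Gg (k+1) x = -∫ x : ℝ, (Polynomial.derivative P).eval x * Gg k x := by
  exact MeasureTheory.integral_mul_deriv_eq_deriv_mul_of_integrable
    (fun x _ => P.hasDerivAt x) (fun x _ => hasDerivAt_Gg k x)
    (integrable_poly_G P (k+1)) (integrable_poly_G (Polynomial.derivative P) k)
    (integrable_poly_G P k)

lemma J_eq (k : ℕ) (P : ℝ[X]) :
    ∫ x : ℝ, P.eval x * Gg k x
      = (-1:ℝ)^k * ∫ x : ℝ, ((Polynomial.derivative)^[k] P).eval x * Real.exp (-(x ^ 2 / 2)) := by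
  induction k generalizing P with
  | zero => simp [Gg, Polynomial.hermite_zero]
  | succ k ih =>
      rw [ibp_step, ih, Function.iterate_succ_apply, pow_succ]
      ring
noncomputable def Kmom (m k : ℕ) : ℝ :=
  ∫ x : ℝ, x ^ m * (Polynomial.aeval x (Polynomial.hermite k)) * Real.exp (-(x ^ 2 / 2))

lemma Kmom_eq (m k : ℕ) : Kmom m k
    = ∫ x : ℝ, ((Polynomial.derivative)^[k] (Polynomial.X ^ m : ℝ[X])).eval x
        * Real.exp (-(x ^ 2 / 2)) := by
  have h1 : Kmom m k = (-1:ℝ)^k * ∫ x : ℝ, (Polynomial.X ^ m : ℝ[X]).eval x * Gg k x := by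
    rw [Kmom, ← MeasureTheory.integral_const_mul]
    congr 1
    funext x
    have hone : (-1:ℝ)^k * (-1:ℝ)^k = 1 := by
      rw [← pow_add]; exact Even.neg_one_pow ⟨k, rfl⟩
    rw [Gg]
    simp only [Polynomial.eval_pow, Polynomial.eval_X]
    linear_combination (-(x ^ m * (Polynomial.aeval x (Polynomial.hermite k))
      * Real.exp (-(x ^ 2 / 2)))) * hone
  rw [h1, J_eq, ← mul_assoc, ← mul_pow]
  norm_num

lemma integral_gauss_half : ∫ x : ℝ, Real.exp (-(x ^ 2 / 2)) = Real.sqrt (2 * Real.pi) := by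
  have h : (fun x : ℝ => Real.exp (-(x ^ 2 / 2))) = fun x : ℝ => Real.exp (-(1/2) * x ^ 2) := by
    funext x; congr 1; ring
  rw [h, integral_gaussian]
  rw [show Real.pi / (1/2 : ℝ) = 2 * Real.pi by ring]

lemma Kmom_lt {m k : ℕ} (h : m < k) : Kmom m k = 0 := by
  rw [Kmom_eq]
  have hz : (Polynomial.derivative)^[k] (Polynomial.X ^ m : ℝ[X]) = 0 :=
    Polynomial.iterate_derivative_eq_zero (by simpa [Polynomial.natDegree_X_pow] using h)
  simp [hz]

lemma Kmom_self (k : ℕ) : Kmom k k = (Nat.factorial k : ℝ) * Real.sqrt (2 * Real.pi) := by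
  rw [Kmom_eq]
  have hd : (Polynomial.derivative)^[k] (Polynomial.X ^ k : ℝ[X])
      = Polynomial.C (Nat.factorial k : ℝ) := by
    rw [Polynomial.iterate_derivative_X_pow_eq_C_mul, Nat.descFactorial_self]
    simp
  rw [hd]
  simp only [Polynomial.eval_C]
  rw [MeasureTheory.integral_const_mul, integral_gauss_half]
lemma eps_sq {p : ℕ} (σ : Equiv.Perm (Fin p)) :
    ((Equiv.Perm.sign σ : ℤ) : ℝ) * ((Equiv.Perm.sign σ : ℤ) : ℝ) = 1 := by
  rcases Int.units_eq_one_or (Equiv.Perm.sign σ) with h | h <;> simp [h]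

lemma det_row {p : ℕ} (M : Matrix (Fin p) (Fin p) ℝ) :
    M.det = ∑ σ : Equiv.Perm (Fin p), ((Equiv.Perm.sign σ : ℤ) : ℝ) * ∏ i, M i (σ i) := by
  rw [← Matrix.det_transpose, Matrix.det_apply']
  simp only [Matrix.transpose_apply]

lemma integrable_mono_hermite (m k : ℕ) :
    Integrable fun t : ℝ =>
      t ^ m * Polynomial.aeval t (Polynomial.hermite k) * Real.exp (-(t ^ 2 / 2)) := by
  have h : (fun t : ℝ =>
      t ^ m * Polynomial.aeval t (Polynomial.hermite k) * Real.exp (-(t ^ 2 / 2)))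
      = fun t : ℝ => ((Polynomial.X ^ m * (Polynomial.hermite k).map (Int.castRingHom ℝ)
          : ℝ[X]).eval t) * Real.exp (-(t ^ 2 / 2)) := by
    funext t
    rw [Polynomial.eval_mul, Polynomial.eval_pow, Polynomial.eval_X, aeval_hermite_eq]
  rw [h]
  exact integrable_poly_gauss _

lemma diag0 {p : ℕ} (σ τ : Equiv.Perm (Fin p)) (hστ : σ ≠ τ) :
    (∏ i : Fin p, Kmom (σ i : ℕ) (τ i : ℕ)) = 0 := by
  by_cases hlt : ∃ i, (σ i : ℕ) < (τ i : ℕ)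
  · obtain ⟨i, hi⟩ := hlt
    exact Finset.prod_eq_zero (Finset.mem_univ i) (Kmom_lt hi)
  · push_neg at hlt
    exfalso
    apply hστ
    have hsum : (∑ i : Fin p, ((τ i : ℕ))) = ∑ i : Fin p, ((σ i : ℕ)) := by
      rw [Equiv.sum_comp σ (fun j : Fin p => (j : ℕ)),
        Equiv.sum_comp τ (fun j : Fin p => (j : ℕ))]
    have hall := (Finset.sum_eq_sum_iff_of_le (fun i _ => hlt i)).mp hsum
    ext i
    exact congrArg Fin.val
      (Fin.val_injective (hall i (Finset.mem_univ i)).symm)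

lemma Z_half (p : ℕ) :
    (∫ x : Fin p → ℝ, vandR x ^ 2 * ∏ l, Real.exp (-((x l) ^ 2 / 2)))
      = (Nat.factorial p : ℝ)
          * ∏ i : Fin p, ((Nat.factorial i : ℝ) * Real.sqrt (2 * Real.pi)) := by
  classical
  have hdeg : ∀ j : Fin p,
      ((Polynomial.hermite (j : ℕ)).map (Int.castRingHom ℝ)).natDegree = (j : ℕ) := fun j => by
    rw [(Polynomial.hermite_monic (j : ℕ)).natDegree_map]
    exact Polynomial.natDegree_hermite
  have hmon : ∀ j : Fin p, ((Polynomial.hermite (j : ℕ)).map (Int.castRingHom ℝ)).Monic :=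
    fun j => (Polynomial.hermite_monic _).map _
  have expand : ∀ x : Fin p → ℝ,
      vandR x ^ 2 * ∏ l, Real.exp (-((x l) ^ 2 / 2))
        = ∑ σ : Equiv.Perm (Fin p), ∑ τ : Equiv.Perm (Fin p),
            (((Equiv.Perm.sign σ : ℤ) : ℝ) * ((Equiv.Perm.sign τ : ℤ) : ℝ))
              * ∏ i : Fin p, ((x i) ^ (σ i : ℕ)
                * Polynomial.aeval (x i) (Polynomial.hermite (τ i : ℕ))
                * Real.exp (-((x i) ^ 2 / 2))) := by
    intro x
    have h1 : vandR x = (Matrix.vandermonde x).det := (Matrix.det_vandermonde x).symm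
    have h2 : (Matrix.vandermonde x).det
        = (Matrix.of fun i j : Fin p =>
            ((Polynomial.hermite (j : ℕ)).map (Int.castRingHom ℝ)).eval (x i)).det :=
      Matrix.det_eval_matrixOfPolynomials_eq_det_vandermonde x _ hdeg hmon
    rw [h1, sq]
    nth_rewrite 2 [h2]
    rw [det_row, det_row, Finset.sum_mul_sum, Finset.sum_mul]
    simp only [Finset.sum_mul]
    refine Finset.sum_congr rfl fun σ _ => Finset.sum_congr rfl fun τ _ => ?_
    simp only [Matrix.of_apply, Matrix.vandermonde_apply, ← aeval_hermite_eq,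
      Finset.prod_mul_distrib]
    ring
  simp only [expand]
  rw [MeasureTheory.integral_finset_sum]
  swap
  · intro σ _
    apply integrable_finset_sum
    intro τ _
    apply Integrable.const_mul
    exact Integrable.fintype_prod (𝕜 := ℝ) fun i => integrable_mono_hermite _ _
  have hinner : ∀ σ : Equiv.Perm (Fin p),
      (∫ x : Fin p → ℝ, ∑ τ : Equiv.Perm (Fin p),
        (((Equiv.Perm.sign σ : ℤ) : ℝ) * ((Equiv.Perm.sign τ : ℤ) : ℝ))
          * ∏ i : Fin p, ((x i) ^ (σ i : ℕ)
            * Polynomial.aeval (x i) (Polynomial.hermite (τ i : ℕ))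
            * Real.exp (-((x i) ^ 2 / 2))))
      = ∏ i : Fin p, Kmom (i : ℕ) (i : ℕ) := by
    intro σ
    rw [MeasureTheory.integral_finset_sum]
    swap
    · intro τ _
      apply Integrable.const_mul
      exact Integrable.fintype_prod (𝕜 := ℝ) fun i => integrable_mono_hermite _ _
    have hterm : ∀ τ : Equiv.Perm (Fin p),
        (∫ x : Fin p → ℝ,
          (((Equiv.Perm.sign σ : ℤ) : ℝ) * ((Equiv.Perm.sign τ : ℤ) : ℝ))
            * ∏ i : Fin p, ((x i) ^ (σ i : ℕ)
              * Polynomial.aeval (x i) (Polynomial.hermite (τ i : ℕ))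
              * Real.exp (-((x i) ^ 2 / 2))))
        = (((Equiv.Perm.sign σ : ℤ) : ℝ) * ((Equiv.Perm.sign τ : ℤ) : ℝ))
            * ∏ i : Fin p, Kmom (σ i : ℕ) (τ i : ℕ) := by
      intro τ
      rw [MeasureTheory.integral_const_mul]
      congr 1
      rw [MeasureTheory.integral_fintype_prod_volume_eq_prod (𝕜 := ℝ)
        (f := fun (i : Fin p) (t : ℝ) => t ^ (σ i : ℕ)
          * Polynomial.aeval t (Polynomial.hermite (τ i : ℕ)) * Real.exp (-(t ^ 2 / 2)))]
      rfl
    simp only [hterm]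
    rw [Finset.sum_eq_single σ]
    · rw [eps_sq, one_mul]
      exact Equiv.prod_comp σ (fun j : Fin p => Kmom (j : ℕ) (j : ℕ))
    · intro τ _ hτ
      rw [diag0 σ τ (Ne.symm hτ), mul_zero]
    · intro h
      exact absurd (Finset.mem_univ σ) h
  simp only [hinner]
  rw [Finset.sum_const, Finset.card_univ, Fintype.card_perm, Fintype.card_fin, nsmul_eq_mul]
  congr 1
  exact Finset.prod_congr rfl fun i _ => Kmom_self (i : ℕ)
lemma vandR_smul {p : ℕ} (c : ℝ) (x : Fin p → ℝ) :
    vandR (c • x) = (∏ j : Fin p, c ^ (Finset.Ioi j).card) * vandR x := by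
  rw [vandR, vandR, ← Finset.prod_mul_distrib]
  refine Finset.prod_congr rfl fun j _ => ?_
  rw [← Finset.prod_const, ← Finset.prod_mul_distrib]
  refine Finset.prod_congr rfl fun k _ => ?_
  simp only [Pi.smul_apply, smul_eq_mul]
  ring

lemma two_N_add (p : ℕ) (hp : 1 ≤ p) :
    (∑ j : Fin p, (Finset.Ioi j).card) * 2 + p = p * p := by
  have h1 : (∑ j : Fin p, (Finset.Ioi j).card) = ∑ j ∈ Finset.range p, j := by
    simp only [Fin.card_Ioi]
    rw [Fin.sum_univ_eq_sum_range (fun j => p - 1 - j)]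
    exact Finset.sum_range_reflect (fun j => j) p
  rw [h1, Finset.sum_range_id_mul_two]
  have := Nat.sub_add_cancel hp
  calc p * (p - 1) + p = p * ((p - 1) + 1) := by ring
    _ = p * p := by rw [this]

lemma fact_prod (p : ℕ) :
    (Nat.factorial p : ℝ) * ∏ i : Fin p, (Nat.factorial (i : ℕ) : ℝ)
      = ∏ l ∈ Finset.Icc 1 p, (Nat.factorial l : ℝ) := by
  rw [Fin.prod_univ_eq_prod_range (fun i => (Nat.factorial i : ℝ)) p]
  induction p with
  | zero => simp
  | succ n ih =>
      rw [Finset.prod_range_succ, Finset.prod_Icc_succ_top (Nat.succ_le_succ (Nat.zero_le n)),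
        ← ih]
      ring

lemma sqrt_pow_eq (z : ℝ) (hz : 0 ≤ z) (n : ℕ) :
    Real.sqrt z ^ n = z ^ ((n : ℝ) / 2) := by
  rw [Real.sqrt_eq_rpow, ← Real.rpow_natCast (z ^ ((1:ℝ)/2)) n, ← Real.rpow_mul hz]
  congr 1
  ring

lemma const_eq (p : ℕ) (hp : 1 ≤ p) (a : ℝ) (ha : 0 < a) :
    ((Real.sqrt (2 * a)) ^ (p * p))⁻¹ * Real.sqrt (2 * Real.pi) ^ p
      = (Real.pi / 2 ^ (p - 1)) ^ ((p : ℝ) / 2) * a ^ (-((p : ℝ) ^ 2) / 2) := by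
  have h2a : (0:ℝ) < 2 * a := by linarith
  have hpp : ((p * p : ℕ) : ℝ) = (p : ℝ) ^ 2 := by push_cast; ring
  rw [sqrt_pow_eq _ h2a.le, sqrt_pow_eq _ (by positivity), hpp,
    ← Real.rpow_neg h2a.le, Real.mul_rpow (by norm_num) ha.le,
    Real.mul_rpow (by norm_num) Real.pi_pos.le,
    Real.div_rpow Real.pi_pos.le (by positivity),
    ← Real.rpow_natCast (2:ℝ) (p - 1), ← Real.rpow_mul (by norm_num : (0:ℝ) ≤ 2)]
  have hX : a ^ (-((p:ℝ) ^ 2 / 2)) = a ^ (-((p:ℝ) ^ 2) / 2) := by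
    congr 1
    ring
  have h21 : (2:ℝ) ^ (-((p:ℝ)^2/2)) * ((2:ℝ) ^ ((p:ℝ)/2)
      * (2:ℝ) ^ ((((p-1:ℕ)):ℝ) * ((p:ℝ)/2))) = 1 := by
    rw [← Real.rpow_add two_pos, ← Real.rpow_add two_pos]
    rw [show -((p:ℝ)^2/2) + ((p:ℝ)/2 + (((p-1:ℕ)):ℝ) * ((p:ℝ)/2)) = 0 from by
      rw [Nat.cast_sub hp]; push_cast; ring]
    exact Real.rpow_zero 2
  have hEpos : (0:ℝ) < (2:ℝ) ^ ((((p-1:ℕ)):ℝ) * ((p:ℝ)/2)) := Real.rpow_pos_of_pos two_pos _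
  rw [← hX, div_mul_eq_mul_div, eq_div_iff hEpos.ne']
  linear_combination (a ^ (-((p:ℝ)^2/2)) * Real.pi ^ ((p:ℝ)/2)) * h21

/-- Mehta/Selberg integral.
`∫_{ℝ^p} Δ_p(x)² ∏ e^{-a x_l²} dx = (π/2^{p-1})^{p/2} a^{-p²/2} ∏_{l=1}^p l!`. -/
theorem mehta_integral (p : ℕ) (hp : 1 ≤ p) (a : ℝ) (ha : 0 < a) :
    (∫ x : Fin p → ℝ, vandR x ^ 2 * ∏ l, Real.exp (-a * (x l) ^ 2))
      = (Real.pi / 2 ^ (p - 1)) ^ ((p : ℝ) / 2) * a ^ (-((p : ℝ) ^ 2) / 2) *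
          ∏ l ∈ Finset.Icc 1 p, (l.factorial : ℝ) := by
  have h2a : (0:ℝ) < 2 * a := by linarith
  set c : ℝ := Real.sqrt (2 * a) with hc
  have hc0 : 0 < c := Real.sqrt_pos.mpr h2a
  have hcsq : c ^ 2 = 2 * a := Real.sq_sqrt h2a.le
  set N : ℕ := ∑ j : Fin p, (Finset.Ioi j).card with hN
  have key : ∀ x : Fin p → ℝ,
      vandR (c • x) ^ 2 * ∏ l, Real.exp (-(((c • x) l) ^ 2 / 2))
        = c ^ (N * 2) * (vandR x ^ 2 * ∏ l, Real.exp (-a * (x l) ^ 2)) := by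
    intro x
    rw [vandR_smul, mul_pow, Finset.prod_pow_eq_pow_sum, ← hN]
    have hexp : ∀ l : Fin p, Real.exp (-(((c • x) l) ^ 2 / 2))
        = Real.exp (-a * (x l) ^ 2) := by
      intro l
      congr 1
      simp only [Pi.smul_apply, smul_eq_mul]
      rw [mul_pow, hcsq]
      ring
    rw [Finset.prod_congr rfl fun l _ => hexp l, ← pow_mul]
    ring
  have hcv' : (∫ x : Fin p → ℝ, vandR (c • x) ^ 2 * ∏ l, Real.exp (-(((c • x) l) ^ 2 / 2)))
      = |((c : ℝ) ^ p)⁻¹| • ∫ y : Fin p → ℝ, vandR y ^ 2 * ∏ l, Real.exp (-((y l) ^ 2 / 2)) := by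
    have h := MeasureTheory.Measure.integral_comp_smul (μ := (volume : Measure (Fin p → ℝ)))
      (fun y : Fin p → ℝ => vandR y ^ 2 * ∏ l, Real.exp (-((y l) ^ 2 / 2))) c
    rwa [Module.finrank_fin_fun] at h
  have h1 : (∫ x : Fin p → ℝ, vandR (c • x) ^ 2 * ∏ l, Real.exp (-(((c • x) l) ^ 2 / 2)))
      = c ^ (N * 2) * ∫ x : Fin p → ℝ, vandR x ^ 2 * ∏ l, Real.exp (-a * (x l) ^ 2) := by
    simp only [key]
    exact MeasureTheory.integral_const_mul _ _
  rw [h1, Z_half, abs_of_pos (by positivity), smul_eq_mul] at hcv'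
  have hcne : (c : ℝ) ^ (N * 2) ≠ 0 := by positivity
  have hsolve : (∫ x : Fin p → ℝ, vandR x ^ 2 * ∏ l, Real.exp (-a * (x l) ^ 2))
      = (c ^ (N * 2))⁻¹ * (((c : ℝ) ^ p)⁻¹
          * ((Nat.factorial p : ℝ)
              * ∏ i : Fin p, ((Nat.factorial (i : ℕ) : ℝ) * Real.sqrt (2 * Real.pi)))) := by
    rw [← hcv', ← mul_assoc, inv_mul_cancel₀ hcne, one_mul]
  rw [hsolve, ← mul_assoc, ← mul_inv, ← pow_add, two_N_add p hp]
  have hconst := const_eq p hp a ha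
  rw [← hc] at hconst
  calc (c ^ (p * p))⁻¹ * ((Nat.factorial p : ℝ)
        * ∏ i : Fin p, ((Nat.factorial (i : ℕ) : ℝ) * Real.sqrt (2 * Real.pi)))
      = ((c ^ (p * p))⁻¹ * Real.sqrt (2 * Real.pi) ^ p)
          * ((Nat.factorial p : ℝ) * ∏ i : Fin p, (Nat.factorial (i : ℕ) : ℝ)) := by
        rw [Finset.prod_mul_distrib, Finset.prod_const, Finset.card_univ, Fintype.card_fin]
        ring
    _ = ((Real.pi / 2 ^ (p - 1)) ^ ((p : ℝ) / 2) * a ^ (-((p : ℝ) ^ 2) / 2))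
          * ∏ l ∈ Finset.Icc 1 p, (Nat.factorial l : ℝ) := by
        rw [hconst, fact_prod]
    _ = _ := by ring
end

section
/- (Contour integral representation of the Laguerre polynomials.) For every n ∈ ℕ, every real α > −1, and every x ∈ ℝ: Σ_{k=0}^{n} [ Γ(n+α+1) / ( Γ(k+α+1) · (n−k)! · k! ) ] · (−x)^k = (1/(2^{α+1} π i)) · ∮_{|z|=1} e^{−xz/2} · (z+2)^{n+α} · z^{−n−1} dz, where the contour is the positively oriented unit circle in ℂ, (z+2)^{n+α} denotes the principal complex power (well-defined since Re(z+2) > 0 on |z| = 1), Γ is the Gamma function, and i is the imaginary unit. -/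
open MeasureTheory Complex Finset Metric

section aux
variable (a c : ℂ)

/-- The explicit `m`-th derivative of `z ↦ exp (a z) (z+2)^c` on the region where
`z + 2` is in the slit plane. -/
noncomputable def lagF (m : ℕ) (z : ℂ) : ℂ :=
  ∑ k ∈ Finset.range (m + 1),
    (m.choose k : ℂ) * a ^ (m - k) * (∏ i ∈ Finset.range k, (c - (i : ℂ))) *
      (Complex.exp (a * z) * (z + 2) ^ (c - (k : ℂ)))

lemma lag_hasDerivAt (w : ℂ) (z : ℂ) (hz : z + 2 ∈ Complex.slitPlane) :
    HasDerivAt (fun z => Complex.exp (a * z) * (z + 2) ^ w)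
      (a * (Complex.exp (a * z) * (z + 2) ^ w)
        + w * (Complex.exp (a * z) * (z + 2) ^ (w - 1))) z := by
  have h1 : HasDerivAt (fun z : ℂ => Complex.exp (a * z)) (Complex.exp (a * z) * a) z := by
    simpa using ((hasDerivAt_id z).const_mul a).cexp
  have h2 : HasDerivAt (fun z : ℂ => (z + 2 : ℂ) ^ w) (w * (z + 2) ^ (w - 1) * 1) z :=
    ((hasDerivAt_id z).add_const 2).cpow_const hz
  refine (h1.fun_mul h2).congr_deriv ?_
  ring

lemma lag_iteratedDeriv (m : ℕ) (z : ℂ) (hz : z + 2 ∈ Complex.slitPlane) :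
    iteratedDeriv m (fun z => Complex.exp (a * z) * (z + 2) ^ c) z = lagF a c m z := by
  induction m generalizing z with
  | zero => simp [lagF]
  | succ m ih =>
    have hUopen : IsOpen {z : ℂ | z + 2 ∈ Complex.slitPlane} :=
      Complex.isOpen_slitPlane.preimage (by fun_prop)
    have hev : iteratedDeriv m (fun z => Complex.exp (a * z) * (z + 2) ^ c)
        =ᶠ[nhds z] lagF a c m :=
      Filter.eventuallyEq_of_mem (hUopen.mem_nhds hz) fun w hw => ih w hw
    rw [iteratedDeriv_succ, hev.deriv_eq]
    have hd : HasDerivAt (lagF a c m)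
        (∑ k ∈ Finset.range (m + 1),
          (m.choose k : ℂ) * a ^ (m - k) * (∏ i ∈ Finset.range k, (c - (i : ℂ))) *
            (a * (Complex.exp (a * z) * (z + 2) ^ (c - (k : ℂ)))
              + (c - (k : ℂ)) * (Complex.exp (a * z) * (z + 2) ^ (c - (k : ℂ) - 1)))) z := by
      exact HasDerivAt.fun_sum fun k _ => (lag_hasDerivAt a (c - (k : ℂ)) z hz).const_mul _
    rw [hd.deriv]
    -- now the Pascal rearrangement
    set E := Complex.exp (a * z) with hE
    set g : ℕ → ℂ := fun k =>
      a ^ (m + 1 - k) * (∏ i ∈ Finset.range k, (c - (i : ℂ))) * (E * (z + 2) ^ (c - (k : ℂ)))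
      with hg
    have hgsucc : ∀ k, g (k + 1)
        = a ^ (m - k) * ((∏ i ∈ Finset.range k, (c - (i : ℂ))) * (c - (k : ℂ)))
          * (E * (z + 2) ^ (c - (k : ℂ) - 1)) := by
      intro k
      simp only [hg, Finset.prod_range_succ, Nat.succ_sub_succ_eq_sub]
      have : c - ((k + 1 : ℕ) : ℂ) = c - (k : ℂ) - 1 := by push_cast; ring
      rw [this]
    have hsplit : ∀ k ∈ Finset.range (m + 1),
        (m.choose k : ℂ) * a ^ (m - k) * (∏ i ∈ Finset.range k, (c - (i : ℂ))) *
            (a * (E * (z + 2) ^ (c - (k : ℂ)))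
              + (c - (k : ℂ)) * (E * (z + 2) ^ (c - (k : ℂ) - 1)))
          = (m.choose k : ℂ) * g k + (m.choose k : ℂ) * g (k + 1) := by
      intro k hk
      have hk' : k ≤ m := Nat.lt_succ_iff.mp (Finset.mem_range.mp hk)
      have hpow : a ^ (m + 1 - k) = a * a ^ (m - k) := by
        rw [show m + 1 - k = (m - k) + 1 from by omega, pow_succ]; ring
      rw [hgsucc k]
      simp only [hg, hpow]
      ring
    rw [Finset.sum_congr rfl hsplit, Finset.sum_add_distrib]
    have hRHS : lagF a c (m + 1) z = ∑ k ∈ Finset.range (m + 2), ((m + 1).choose k : ℂ) * g k := by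
      unfold lagF
      refine Finset.sum_congr rfl fun k _ => ?_
      simp only [hg, hE]
      ring
    rw [hRHS, Finset.sum_range_succ' (fun k => ((m + 1).choose k : ℂ) * g k) (m + 1)]
    have hchoose : ∀ i, (((m + 1).choose (i + 1) : ℕ) : ℂ)
        = (m.choose i : ℂ) + (m.choose (i + 1) : ℂ) := by
      intro i; rw [Nat.choose_succ_succ]; push_cast; ring
    simp only [hchoose, add_mul, Finset.sum_add_distrib, Nat.choose_zero_right, Nat.cast_one]
    have h2 : ∑ k ∈ Finset.range (m + 1), (m.choose (k + 1) : ℂ) * g (k + 1)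
        + 1 * g 0 = ∑ k ∈ Finset.range (m + 1), (m.choose k : ℂ) * g k := by
      have := (Finset.sum_range_succ' (fun k => (m.choose k : ℂ) * g k) (m + 1)).symm
      rw [Finset.sum_range_succ (fun k => (m.choose k : ℂ) * g k) (m + 1)] at this
      simpa using this
    rw [add_assoc, h2]
    ring
end aux

lemma lag_prod_gamma (n : ℕ) (α : ℝ) (hα : -1 < α) :
    ∀ k, k ≤ n → (∏ i ∈ Finset.range k, ((n : ℝ) + α - i))
      = Real.Gamma ((n : ℝ) + α + 1) / Real.Gamma ((n : ℝ) + α + 1 - k) := by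
  intro k
  induction k with
  | zero =>
    intro _
    have h0 : (0 : ℝ) < (n : ℝ) + α + 1 := by
      have : (0:ℝ) ≤ (n:ℝ) := Nat.cast_nonneg n
      linarith
    simp [div_self (ne_of_gt (Real.Gamma_pos_of_pos h0))]
  | succ k ih =>
    intro hk1
    have hk : k ≤ n := Nat.le_of_succ_le hk1
    have hy : (0 : ℝ) < (n : ℝ) + α - k := by
      have : ((k : ℝ) + 1) ≤ n := by exact_mod_cast hk1
      linarith
    have hΓ : Real.Gamma ((n : ℝ) + α + 1 - k) = ((n:ℝ) + α - k) * Real.Gamma ((n:ℝ) + α - k) := by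
      have := Real.Gamma_add_one (ne_of_gt hy)
      rw [show (n:ℝ) + α + 1 - k = ((n:ℝ) + α - k) + 1 from by ring] at *
      exact this
    rw [Finset.prod_range_succ, ih hk, hΓ]
    have hΓ2 : Real.Gamma ((n:ℝ) + α - k) ≠ 0 := ne_of_gt (Real.Gamma_pos_of_pos hy)
    have hcast : (n:ℝ) + α + 1 - ((k:ℕ)+1 : ℕ) = (n:ℝ) + α - k := by push_cast; ring
    rw [hcast]
    field_simp

/-- contour integral representation of the generalized Laguerre
polynomials.  For `n ∈ ℕ`, `α > -1` and `x ∈ ℝ`,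
`L_n^{(α)}(x) = Σ_{k=0}^n Γ(n+α+1)/(Γ(k+α+1)(n-k)!k!)·(−x)^k
  = (1/(2^{α+1} π i)) ∮_{|z|=1} e^{-xz/2}(z+2)^{n+α} z^{-n-1} dz`,
with the principal power `(z+2)^{n+α}` and the positively oriented unit circle. -/
theorem laguerre_contour_integral (n : ℕ) (α : ℝ) (hα : -1 < α) (x : ℝ) :
    ((∑ k ∈ Finset.range (n + 1),
          Real.Gamma (n + α + 1) /
            (Real.Gamma (k + α + 1) * (n - k).factorial * k.factorial) *
            (-x) ^ k : ℝ) : ℂ)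
      = (1 / (((2 : ℝ) ^ (α + 1) : ℝ) * Real.pi * Complex.I)) *
          ∮ z in C(0, 1),
            Complex.exp (-(x : ℂ) * z / 2) * (z + 2) ^ ((n : ℂ) + (α : ℂ)) *
              z ^ (-(n : ℤ) - 1) := by
  set a : ℂ := -(x : ℂ) / 2 with ha
  set c : ℂ := (n : ℂ) + (α : ℂ) with hc
  set f : ℂ → ℂ := fun z => Complex.exp (a * z) * (z + 2) ^ c with hfdef
  have hU : ∀ z : ℂ, ‖z‖ ≤ 1 → z + 2 ∈ Complex.slitPlane := by
    intro z hz
    rw [Complex.mem_slitPlane_iff]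
    left
    have h2 := abs_le.mp (le_trans (Complex.abs_re_le_norm z) hz)
    simp only [Complex.add_re, Complex.re_ofNat]
    linarith [h2.1]
  -- the circle integral in the statement equals the "Cauchy" integral of f
  have hcongr : (∮ z in C(0, 1),
        Complex.exp (-(x : ℂ) * z / 2) * (z + 2) ^ c * z ^ (-(n : ℤ) - 1))
      = ∮ z in C(0, 1), ((1 : ℂ) / (z - 0)) ^ n • ((z - 0)⁻¹ • f z) := by
    refine circleIntegral.integral_congr zero_le_one fun z hz => ?_
    have hz0 : z ≠ 0 := by
      intro h
      simp [h] at hz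
    have hxz : -(x : ℂ) * z / 2 = a * z := by rw [ha]; ring
    have hzpow : (-(n : ℤ) - 1) = -(((n+1) : ℕ) : ℤ) := by push_cast; ring
    simp only [hfdef, smul_eq_mul, sub_zero, hxz, hzpow, zpow_neg, zpow_natCast]
    rw [pow_succ]
    field_simp
    rw [one_div, inv_pow, mul_assoc, mul_inv_cancel₀ (pow_ne_zero n hz0), mul_one]
  -- power series / Cauchy integral formula
  have hfd : DifferentiableOn ℂ f (closedBall (0 : ℂ) 1) := fun z hz =>
    ((lag_hasDerivAt a c z (hU z (by simpa using mem_closedBall_zero_iff.mp hz))).differentiableAt).differentiableWithinAt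
  have hps : HasFPowerSeriesOnBall f (cauchyPowerSeries f 0 1) 0 1 := by
    have := hfd.hasFPowerSeriesOnBall (R := 1) one_pos
    simpa using this
  have hfact := hps.factorial_smul (1 : ℂ) n
  have hiter : iteratedFDeriv ℂ n f 0 (fun _ => 1) = lagF a c n 0 := by
    rw [← iteratedDeriv_eq_iteratedFDeriv]
    exact lag_iteratedDeriv a c n 0 (hU 0 (by norm_num))
  have happ := cauchyPowerSeries_apply f 0 1 n 1
  have hπI : (2 * (Real.pi : ℂ) * Complex.I) ≠ 0 := by
    simp [Real.pi_ne_zero, Complex.I_ne_zero, Complex.ofReal_ne_zero]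
  have hfne : (n.factorial : ℂ) ≠ 0 := by exact_mod_cast n.factorial_ne_zero
  have hv : (n.factorial : ℂ) * (cauchyPowerSeries f 0 1 n fun _ => 1) = lagF a c n 0 := by
    rw [← hiter, ← hfact, nsmul_eq_mul]
  have hval : (cauchyPowerSeries f 0 1 n fun _ => 1) = (n.factorial : ℂ)⁻¹ * lagF a c n 0 :=
    (eq_inv_mul_iff_mul_eq₀ hfne).mpr hv
  have hint : (∮ z in C(0, 1), ((1 : ℂ) / (z - 0)) ^ n • ((z - 0)⁻¹ • f z))
      = 2 * (Real.pi : ℂ) * Complex.I * ((n.factorial : ℂ)⁻¹ * lagF a c n 0) := by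
    calc (∮ z in C(0, 1), ((1 : ℂ) / (z - 0)) ^ n • ((z - 0)⁻¹ • f z))
        = 2 * (Real.pi : ℂ) * Complex.I *
            ((2 * (Real.pi : ℂ) * Complex.I)⁻¹ *
              ∮ z in C(0, 1), ((1 : ℂ) / (z - 0)) ^ n • ((z - 0)⁻¹ • f z)) :=
          (mul_inv_cancel_left₀ hπI _).symm
      _ = 2 * (Real.pi : ℂ) * Complex.I * ((n.factorial : ℂ)⁻¹ * lagF a c n 0) := by
          congr 1
          rw [← hval, happ, smul_eq_mul]
  rw [hcongr, hint]
  -- final algebra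
  have hBpos : (0:ℝ) < (2:ℝ) ^ (α + 1) := Real.rpow_pos_of_pos two_pos _
  have hL0 : lagF a c n 0 = ∑ k ∈ Finset.range (n + 1),
      (n.choose k : ℂ) * a ^ (n - k) * (∏ i ∈ Finset.range k, (c - (i : ℂ)))
        * (2 : ℂ) ^ (c - (k : ℂ)) := by
    unfold lagF
    refine Finset.sum_congr rfl fun k _ => ?_
    norm_num
  have hrefl : lagF a c n 0 = ∑ j ∈ Finset.range (n + 1),
      ((n.choose (n - j) : ℂ) * a ^ (n - (n - j)) *
        (∏ i ∈ Finset.range (n - j), (c - (i : ℂ))) * (2 : ℂ) ^ (c - ((n - j : ℕ) : ℂ))) := by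
    rw [hL0]
    have := Finset.sum_range_reflect (fun k => (n.choose k : ℂ) * a ^ (n - k) *
      (∏ i ∈ Finset.range k, (c - (i : ℂ))) * (2 : ℂ) ^ (c - (k : ℂ))) (n + 1)
    simpa [Nat.add_sub_cancel] using this.symm
  rw [hrefl]
  rw [Complex.ofReal_sum, Finset.mul_sum, Finset.mul_sum, Finset.mul_sum]
  refine Finset.sum_congr rfl fun j hj => ?_
  have hjn : j ≤ n := Nat.lt_succ_iff.mp (Finset.mem_range.mp hj)
  rw [Nat.choose_symm hjn, Nat.sub_sub_self hjn]
  have hprod : (∏ i ∈ Finset.range (n - j), (c - (i : ℂ)))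
      = ((Real.Gamma ((n:ℝ) + α + 1) / Real.Gamma ((j:ℝ) + α + 1) : ℝ) : ℂ) := by
    have h1 : (∏ i ∈ Finset.range (n - j), (c - (i : ℂ)))
        = (((∏ i ∈ Finset.range (n - j), ((n : ℝ) + α - i)) : ℝ) : ℂ) := by
      rw [Complex.ofReal_prod]
      refine Finset.prod_congr rfl fun i _ => ?_
      rw [hc]; push_cast; ring
    rw [h1, lag_prod_gamma n α hα (n - j) (Nat.sub_le n j),
      show (n:ℝ) + α + 1 - ((n - j : ℕ) : ℝ) = (j:ℝ) + α + 1 by rw [Nat.cast_sub hjn]; ring]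
  have hpow2 : (2 : ℂ) ^ (c - ((n - j : ℕ) : ℂ)) = (((2:ℝ) ^ (α + (j:ℝ)) : ℝ) : ℂ) := by
    have he : c - ((n - j : ℕ) : ℂ) = ((α + (j:ℝ) : ℝ) : ℂ) := by
      rw [hc, Nat.cast_sub hjn]; push_cast; ring
    rw [he, show (2:ℂ) = ((2:ℝ):ℂ) by norm_num, Complex.ofReal_cpow (by norm_num)]
  have ha' : a ^ j = (((-x / 2) ^ j : ℝ) : ℂ) := by rw [ha]; push_cast; ring
  rw [hprod, hpow2, ha']
  have hcancel : ∀ w : ℂ, 1 / ((((2:ℝ) ^ (α + 1) : ℝ) : ℂ) * (Real.pi : ℂ) * Complex.I) *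
      (2 * (Real.pi : ℂ) * Complex.I * w) = ((((2:ℝ) ^ (α + 1) : ℝ) : ℂ))⁻¹ * (2 * w) := by
    intro w
    have hB : ((((2:ℝ) ^ (α + 1) : ℝ) : ℂ)) ≠ 0 := Complex.ofReal_ne_zero.mpr (ne_of_gt hBpos)
    have hπ : ((Real.pi : ℝ) : ℂ) ≠ 0 := Complex.ofReal_ne_zero.mpr Real.pi_ne_zero
    field_simp
  rw [hcancel]
  -- now a purely real statement
  have hΓj : Real.Gamma ((j:ℝ) + α + 1) ≠ 0 := by
    refine ne_of_gt (Real.Gamma_pos_of_pos ?_)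
    have : (0:ℝ) ≤ (j:ℝ) := Nat.cast_nonneg j
    linarith
  have h2α : (2:ℝ) ^ (α + 1) = 2 ^ α * 2 := by
    rw [Real.rpow_add two_pos, Real.rpow_one]
  have h2αj : (2:ℝ) ^ (α + (j:ℝ)) = 2 ^ α * 2 ^ j := by
    rw [Real.rpow_add two_pos, Real.rpow_natCast]
  have h2αne : (2:ℝ) ^ α ≠ 0 := ne_of_gt (Real.rpow_pos_of_pos two_pos α)
  have hcf : ((n.choose j : ℝ)) * (j.factorial : ℝ) * ((n - j).factorial : ℝ)
      = (n.factorial : ℝ) := by exact_mod_cast Nat.choose_mul_factorial_mul_factorial hjn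
  have hreal : Real.Gamma ((n:ℝ) + α + 1) /
        (Real.Gamma ((j:ℝ) + α + 1) * (n - j).factorial * j.factorial) * (-x) ^ j
      = ((2:ℝ) ^ (α + 1))⁻¹ * (2 * ((n.factorial : ℝ)⁻¹ * ((n.choose j : ℝ) * (-x / 2) ^ j *
          (Real.Gamma ((n:ℝ) + α + 1) / Real.Gamma ((j:ℝ) + α + 1)) * (2:ℝ) ^ (α + (j:ℝ))))) := by
    rw [h2α, h2αj, ← hcf, div_pow]
    have hjf : (j.factorial : ℝ) ≠ 0 := by exact_mod_cast j.factorial_ne_zero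
    have hnjf : ((n - j).factorial : ℝ) ≠ 0 := by exact_mod_cast (n - j).factorial_ne_zero
    have hch : (n.choose j : ℝ) ≠ 0 := Nat.cast_ne_zero.mpr (Nat.choose_pos hjn).ne'
    have h2j : (2:ℝ) ^ j ≠ 0 := pow_ne_zero j two_ne_zero
    field_simp [hjf, hnjf, hΓj, h2αne, hch, h2j]
  rw [hreal]
  push_cast
  ring
end

section
/- (Scaling estimate for Gaussian Vandermonde moments.) Let n ≥ 1, a > 0, η > 0 and α = (α_1,…,α_n) ∈ ℕ^n with |α| := α_1+⋯+α_n. Then there exists C > 0 such that for all real N ≥ 1: | ∫_{[−η,η]^n} Δ_n(t)² · ∏_{l=1}^n t_l^{α_l} · e^{−N a t_l²} dt | ≤ C · N^{−(n² + |α|)/2}. -/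
open MeasureTheory Finset

private lemma aux_integrable_abs_pow (k : ℕ) {a : ℝ} (ha : 0 < a) :
    Integrable (fun x : ℝ => |x| ^ k * Real.exp (-a * x ^ 2)) := by
  have h1 : Integrable (fun x : ℝ => x ^ k * Real.exp (-a * x ^ 2)) := by
    have hk : (-1 : ℝ) < (k : ℝ) :=
      lt_of_lt_of_le (by norm_num) (Nat.cast_nonneg k)
    simpa [Real.rpow_natCast] using integrable_rpow_mul_exp_neg_mul_sq ha hk
  refine h1.abs.congr ?_
  filter_upwards with x
  rw [abs_mul, abs_pow, abs_of_pos (Real.exp_pos _)]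

private lemma aux_integrable_one_add (m : ℕ) {a : ℝ} (ha : 0 < a) :
    Integrable (fun x : ℝ => (1 + |x|) ^ m * Real.exp (-a * x ^ 2)) := by
  have hEq : (fun x : ℝ => (1 + |x|) ^ m * Real.exp (-a * x ^ 2))
      = fun x : ℝ => ∑ j ∈ Finset.range (m + 1),
        (|x| ^ j * Real.exp (-a * x ^ 2)) * ((m.choose j : ℝ)) := by
    funext x
    rw [add_comm (1 : ℝ), add_pow, Finset.sum_mul]
    refine Finset.sum_congr rfl fun j hj => ?_
    ring
  rw [hEq]
  exact integrable_finset_sum _ fun j _ =>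
    (aux_integrable_abs_pow j ha).mul_const _

private lemma aux_abs_le_prod {n : ℕ} (s : Fin n → ℝ) (j : Fin n) :
    |s j| ≤ ∏ l, (1 + |s l|) := by
  calc |s j| ≤ 1 + |s j| := by linarith [abs_nonneg (s j)]
  _ = (1 + |s j|) * 1 := (mul_one _).symm
  _ ≤ (1 + |s j|) * ∏ l ∈ Finset.univ.erase j, (1 + |s l|) := by
      refine mul_le_mul_of_nonneg_left ?_ (by positivity)
      calc (1 : ℝ) = ∏ _l ∈ Finset.univ.erase j, (1 : ℝ) := by simp
        _ ≤ _ := Finset.prod_le_prod (fun _ _ => zero_le_one)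
            (fun l _ => by linarith [abs_nonneg (s l)])
  _ = ∏ l, (1 + |s l|) :=
      Finset.mul_prod_erase Finset.univ (fun l => 1 + |s l|) (Finset.mem_univ j)

/-- scaling estimate for Gaussian Vandermonde moments.
`|∫_{[-η,η]^n} Δ_n(t)² ∏ t_l^{α_l} e^{-N a t_l²} dt| ≤ C·N^{-(n²+|α|)/2}` for all
`N ≥ 1`. -/
theorem gaussian_vandermonde_moment_estimate
    (n : ℕ) (hn : 1 ≤ n) (a η : ℝ) (ha : 0 < a) (hη : 0 < η) (α : Fin n → ℕ) :
    ∃ C > (0 : ℝ), ∀ N : ℝ, 1 ≤ N →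
      |∫ t in Set.univ.pi (fun _ : Fin n => Set.Icc (-η) η),
          vandR t ^ 2 * ∏ l, (t l) ^ (α l) * Real.exp (-N * a * (t l) ^ 2)| ≤
        C * N ^ (-(((n ^ 2 : ℕ) : ℝ) + ((∑ l, α l : ℕ) : ℝ)) / 2) := by
  classical
  set P : ℕ := ∑ j : Fin n, (Finset.Ioi j).card with hPdef
  set A : ℕ := ∑ l, α l with hA
  set m : ℕ := 2 * P + A with hm
  -- combinatorics: `2 P = n (n-1)` and `m + n = n² + A`
  have hP2 : P * 2 = n * (n - 1) := by
    have h1 : P = ∑ i ∈ Finset.range n, (n - 1 - i) := by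
      rw [hPdef,
        show (∑ j : Fin n, (Finset.Ioi j).card) = ∑ j : Fin n, (n - 1 - (j : ℕ)) from
          Finset.sum_congr rfl fun j _ => Fin.card_Ioi j]
      exact Fin.sum_univ_eq_sum_range _ n
    rw [h1, Finset.sum_range_reflect (fun i => i) n]
    exact Finset.sum_range_id_mul_two n
  have hExp : m + n = n ^ 2 + A := by
    obtain ⟨k, rfl⟩ : ∃ k, n = k + 1 := ⟨n - 1, (Nat.succ_pred_eq_of_pos hn).symm⟩
    have h2 : P * 2 = (k + 1) * k := by simpa using hP2
    have h3 : (k + 1) ^ 2 = (k + 1) * k + (k + 1) := by ring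
    rw [hm]
    omega
  -- the rescaled (N-independent) integrand
  set G : (Fin n → ℝ) → ℝ := fun s =>
    vandR s ^ 2 * ∏ l, (s l) ^ (α l) * Real.exp (-a * (s l) ^ 2) with hG
  have hvcont : Continuous fun s : Fin n → ℝ => vandR s := by
    unfold vandR
    exact continuous_finset_prod _ fun j _ =>
      continuous_finset_prod _ fun k _ => (continuous_apply k).sub (continuous_apply j)
  have hGcont : Continuous G := by
    refine (hvcont.pow 2).mul (continuous_finset_prod _ fun l _ => ?_)
    exact ((continuous_apply l).pow _).mul
      (Real.continuous_exp.comp (continuous_const.mul ((continuous_apply l).pow 2)))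
  -- pointwise bound by a product of one-variable integrable functions
  have hbound : ∀ s : Fin n → ℝ, ‖G s‖ ≤
      (4 : ℝ) ^ P * ∏ l, ((1 + |s l|) ^ m * Real.exp (-a * (s l) ^ 2)) := by
    intro s
    set Q : ℝ := ∏ l, (1 + |s l|) with hQ
    have hQ1 : (1 : ℝ) ≤ Q := by
      rw [hQ]
      calc (1 : ℝ) = ∏ _l : Fin n, (1 : ℝ) := by simp
        _ ≤ _ := Finset.prod_le_prod (fun _ _ => zero_le_one)
            (fun l _ => by linarith [abs_nonneg (s l)])
    have hQ0 : (0 : ℝ) ≤ Q := by linarith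
    have hsl : ∀ l, |s l| ≤ Q := fun l => aux_abs_le_prod s l
    have hvand : |vandR s| ≤ (2 * Q) ^ P := by
      unfold vandR
      rw [Finset.abs_prod]
      calc ∏ j : Fin n, |∏ k ∈ Finset.Ioi j, (s k - s j)|
          ≤ ∏ j : Fin n, (2 * Q) ^ (Finset.Ioi j).card := by
            refine Finset.prod_le_prod (fun _ _ => abs_nonneg _) fun j _ => ?_
            rw [Finset.abs_prod, ← Finset.prod_const]
            refine Finset.prod_le_prod (fun _ _ => abs_nonneg _) fun k _ => ?_
            calc |s k - s j| ≤ |s k| + |s j| := abs_sub _ _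
            _ ≤ 2 * Q := by linarith [hsl k, hsl j]
        _ = (2 * Q) ^ P := Finset.prod_pow_eq_pow_sum _ _ _
    have hGabs : ‖G s‖ = vandR s ^ 2 * ∏ l, (|s l| ^ (α l) * Real.exp (-a * (s l) ^ 2)) := by
      rw [hG, Real.norm_eq_abs, abs_mul, abs_of_nonneg (sq_nonneg _), Finset.abs_prod]
      congr 1
      refine Finset.prod_congr rfl fun l _ => ?_
      rw [abs_mul, abs_pow, abs_of_pos (Real.exp_pos _)]
    rw [hGabs]
    have h1 : vandR s ^ 2 ≤ (4 : ℝ) ^ P * Q ^ (2 * P) := by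
      have h := pow_le_pow_left₀ (abs_nonneg (vandR s)) hvand 2
      rw [sq_abs] at h
      calc vandR s ^ 2 ≤ ((2 * Q) ^ P) ^ 2 := h
        _ = (4 : ℝ) ^ P * Q ^ (2 * P) := by
            rw [show (4 : ℝ) = 2 ^ 2 by norm_num, mul_pow, mul_pow, ← pow_mul,
              ← pow_mul, ← pow_mul, Nat.mul_comm P 2]
    have h2 : ∏ l, (|s l| ^ (α l) * Real.exp (-a * (s l) ^ 2))
        ≤ Q ^ A * ∏ l, Real.exp (-a * (s l) ^ 2) := by
      rw [← Finset.prod_pow_eq_pow_sum, ← Finset.prod_mul_distrib]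
      refine Finset.prod_le_prod (fun l _ => by positivity) fun l _ => ?_
      exact mul_le_mul_of_nonneg_right (pow_le_pow_left₀ (abs_nonneg _) (hsl l) _)
        (Real.exp_pos _).le
    calc vandR s ^ 2 * ∏ l, (|s l| ^ (α l) * Real.exp (-a * (s l) ^ 2))
        ≤ ((4 : ℝ) ^ P * Q ^ (2 * P)) * (Q ^ A * ∏ l, Real.exp (-a * (s l) ^ 2)) := by
          refine mul_le_mul h1 h2 ?_ ?_
          · exact Finset.prod_nonneg fun l _ => by positivity
          · positivity
      _ = (4 : ℝ) ^ P * (Q ^ m * ∏ l, Real.exp (-a * (s l) ^ 2)) := by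
          rw [hm, pow_add]; ring
      _ = (4 : ℝ) ^ P * ∏ l, ((1 + |s l|) ^ m * Real.exp (-a * (s l) ^ 2)) := by
          rw [hQ, ← Finset.prod_pow, ← Finset.prod_mul_distrib]
  have hBint : Integrable (fun s : Fin n → ℝ =>
      (4 : ℝ) ^ P * ∏ l, ((1 + |s l|) ^ m * Real.exp (-a * (s l) ^ 2))) :=
    (Integrable.fintype_prod fun _ : Fin n => aux_integrable_one_add m ha).const_mul _
  have hGint : Integrable G :=
    hBint.mono' hGcont.aestronglyMeasurable (Filter.Eventually.of_forall hbound)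
  set C₀ : ℝ := ∫ s : Fin n → ℝ, ‖G s‖ with hC₀
  have hC₀0 : 0 ≤ C₀ := integral_nonneg fun s => norm_nonneg _
  refine ⟨C₀ + 1, by linarith, fun N hN => ?_⟩
  have hN0 : (0 : ℝ) < N := by linarith
  set c : ℝ := Real.sqrt N with hc
  have hcpos : 0 < c := Real.sqrt_pos.2 hN0
  have hc2 : c ^ 2 = N := Real.sq_sqrt hN0.le
  set SB : Set (Fin n → ℝ) := Set.univ.pi fun _ : Fin n => Set.Icc (-(c * η)) (c * η)
    with hSB
  set Box : Set (Fin n → ℝ) := Set.univ.pi fun _ : Fin n => Set.Icc (-η) η with hBox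
  set F : (Fin n → ℝ) → ℝ := fun t =>
    vandR t ^ 2 * ∏ l, (t l) ^ (α l) * Real.exp (-N * a * (t l) ^ 2) with hF
  have hmem : ∀ t : Fin n → ℝ, t ∈ Box ↔ c • t ∈ SB := by
    intro t
    have hiff : ∀ x : ℝ, (-η ≤ x ∧ x ≤ η) ↔ (-(c * η) ≤ c * x ∧ c * x ≤ c * η) := by
      intro x
      rw [show -(c * η) = c * (-η) by ring, mul_le_mul_iff_right₀ hcpos, mul_le_mul_iff_right₀ hcpos]
    simp only [hBox, hSB, Set.mem_pi, Set.mem_univ, forall_true_left, Set.mem_Icc,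
      Pi.smul_apply, smul_eq_mul, true_implies]
    exact forall_congr' fun l => hiff (t l)
  have hscale : ∀ t : Fin n → ℝ, G (c • t) = c ^ m * F t := by
    intro t
    have h1 : vandR (c • t) = c ^ P * vandR t := by
      unfold vandR
      have : ∀ j : Fin n, ∏ k ∈ Finset.Ioi j, ((c • t) k - (c • t) j)
          = c ^ (Finset.Ioi j).card * ∏ k ∈ Finset.Ioi j, (t k - t j) := by
        intro j
        rw [← Finset.prod_const, ← Finset.prod_mul_distrib]
        refine Finset.prod_congr rfl fun k _ => ?_
        simp only [Pi.smul_apply, smul_eq_mul]; ring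
      simp_rw [this]
      rw [Finset.prod_mul_distrib, Finset.prod_pow_eq_pow_sum]
    have h2 : ∏ l, ((c • t) l) ^ (α l) * Real.exp (-a * ((c • t) l) ^ 2)
        = c ^ A * ∏ l, (t l) ^ (α l) * Real.exp (-N * a * (t l) ^ 2) := by
      rw [hA, ← Finset.prod_pow_eq_pow_sum, ← Finset.prod_mul_distrib]
      refine Finset.prod_congr rfl fun l _ => ?_
      have hexp : -a * ((c • t) l) ^ 2 = -N * a * (t l) ^ 2 := by
        simp only [Pi.smul_apply, smul_eq_mul]
        rw [mul_pow, hc2]; ring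
      rw [hexp]
      simp only [Pi.smul_apply, smul_eq_mul, mul_pow]
      ring
    simp only [hG, hF]
    rw [h1, h2, hm, pow_add, pow_mul']
    ring
  have hcm : (0 : ℝ) < c ^ m := pow_pos hcpos m
  have hkey : ∀ t : Fin n → ℝ,
      Box.indicator F t = (c ^ m)⁻¹ * SB.indicator G (c • t) := by
    intro t
    by_cases ht : t ∈ Box
    · rw [Set.indicator_of_mem ht, Set.indicator_of_mem ((hmem t).1 ht), hscale,
        ← mul_assoc, inv_mul_cancel₀ hcm.ne', one_mul]
    · rw [Set.indicator_of_notMem ht,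
        Set.indicator_of_notMem (fun hmem' => ht ((hmem t).2 hmem')), mul_zero]
  have hmeasBox : MeasurableSet Box :=
    MeasurableSet.univ_pi fun _ => measurableSet_Icc
  have hmeasSB : MeasurableSet SB :=
    MeasurableSet.univ_pi fun _ => measurableSet_Icc
  have hI : ∫ t in Box, F t
      = (c ^ m)⁻¹ * ((c ^ n)⁻¹ * ∫ s in SB, G s) := by
    rw [← integral_indicator hmeasBox]
    calc ∫ t, Box.indicator F t
        = ∫ t, (c ^ m)⁻¹ * SB.indicator G (c • t) := by
          exact integral_congr_ae (Filter.Eventually.of_forall hkey)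
      _ = (c ^ m)⁻¹ * ∫ t, SB.indicator G (c • t) := integral_const_mul _ _
      _ = (c ^ m)⁻¹ * ((c ^ n)⁻¹ * ∫ s, SB.indicator G s) := by
          rw [Measure.integral_comp_smul volume (SB.indicator G) c, Module.finrank_fin_fun,
            smul_eq_mul, abs_of_pos (by positivity : (0 : ℝ) < (c ^ n)⁻¹)]
      _ = (c ^ m)⁻¹ * ((c ^ n)⁻¹ * ∫ s in SB, G s) := by
          rw [integral_indicator hmeasSB]
  have hSBle : |∫ s in SB, G s| ≤ C₀ := by
    calc |∫ s in SB, G s| ≤ ∫ s in SB, ‖G s‖ := by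
          simpa [Real.norm_eq_abs] using norm_integral_le_integral_norm
            (μ := volume.restrict SB) G
      _ ≤ C₀ := setIntegral_le_integral hGint.norm
          (Filter.Eventually.of_forall fun s => norm_nonneg _)
  -- power arithmetic
  have hcpow : ∀ k : ℕ, (c : ℝ) ^ k = N ^ ((k : ℝ) / 2) := by
    intro k
    rw [hc, Real.sqrt_eq_rpow, ← Real.rpow_natCast (N ^ (1/2 : ℝ)) k,
      ← Real.rpow_mul hN0.le]
    congr 1
    ring
  have hpowid : (c ^ m)⁻¹ * (c ^ n)⁻¹
      = N ^ (-(((n ^ 2 : ℕ) : ℝ) + ((A : ℕ) : ℝ)) / 2) := by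
    rw [← mul_inv, ← pow_add, hcpow (m + n), ← Real.rpow_neg hN0.le]
    congr 1
    rw [hExp]
    push_cast
    ring
  rw [hI, abs_mul, abs_mul, abs_of_pos (inv_pos.2 hcm), abs_of_pos (inv_pos.2 (pow_pos hcpos n)),
    ← mul_assoc, hpowid]
  have hrpos : (0 : ℝ) < N ^ (-(((n ^ 2 : ℕ) : ℝ) + ((A : ℕ) : ℝ)) / 2) :=
    Real.rpow_pos_of_pos hN0 _
  rw [mul_comm]
  exact mul_le_mul_of_nonneg_right (by linarith) hrpos.le
end
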